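/- arXiv:1306.6599 — 5 statements merged into one kernel-verified Lean document; each statement's English description precedes it below -/
import Mathlib

section
/- Let m ≥ 3, ω = exp(2πi/m), and 1 ≤ ℓ ≤ m−1. Then for complex z, z̄ with z ≠ z̄ω^j for all j and z^m ≠ z̄^m, ∑_{j=0}^{m-1} ((z + z̄ω^j)/(z − z̄ω^j))·ω^{jℓ} = 2m·z^ℓ·z̄^{m−ℓ}/(z^m − z̄^m). -/
theorem sum_dihedral_cotangent_type
    (m : ℕ) (hm : 3 ≤ m)
    (ω : ℂ) (hω : ω = Complex.exp (2 * Real.pi * Complex.I / m))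
    (ℓ : ℕ) (hl1 : 1 ≤ ℓ) (hl2 : ℓ ≤ m - 1)
    (z zbar : ℂ) (hzbar : zbar ≠ 0)
    (hz : ∀ j < m, z - zbar * ω ^ j ≠ 0)
    (hzm : z ^ m - zbar ^ m ≠ 0) :
    ∑ j ∈ Finset.range m, (z + zbar * ω ^ j) / (z - zbar * ω ^ j) * ω ^ (j * ℓ)
      = 2 * m * z ^ ℓ * zbar ^ (m - ℓ) / (z ^ m - zbar ^ m) := by
  have hprim : IsPrimitiveRoot ω m := by
    rw [hω]; exact Complex.isPrimitiveRoot_exp m (by omega)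
  have hωm : ω ^ m = 1 := hprim.pow_eq_one
  have hlm : ℓ < m := by omega
  -- orthogonality
  have horth : ∀ r : ℕ, ∑ j ∈ Finset.range m, ω ^ (j * r) = if m ∣ r then (m : ℂ) else 0 := by
    intro r
    simp_rw [mul_comm, pow_mul]
    by_cases h : m ∣ r
    · rw [if_pos h]
      have : ω ^ r = 1 := (hprim.pow_eq_one_iff_dvd r).mpr h
      simp [this]
    · rw [if_neg h]
      have hne : ω ^ r ≠ 1 := fun hh => h ((hprim.pow_eq_one_iff_dvd r).mp hh)
      have hone : (ω ^ r) ^ m = 1 := by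
        rw [← pow_mul, mul_comm, pow_mul, hωm, one_pow]
      rw [geom_sum_eq hne, hone, sub_self, zero_div]
  have hSj : ∀ j : ℕ,
      (∑ n ∈ Finset.range m, z ^ n * (zbar * ω ^ j) ^ (m - 1 - n)) * (z - zbar * ω ^ j)
        = z ^ m - zbar ^ m := by
    intro j
    rw [geom_sum₂_mul]
    congr 1
    rw [mul_pow, ← pow_mul, mul_comm j m, pow_mul, hωm, one_pow, mul_one]
  have hterm : ∀ j ∈ Finset.range m,
      (z + zbar * ω ^ j) / (z - zbar * ω ^ j) * ω ^ (j * ℓ)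
        = ((z + zbar * ω ^ j) * (∑ n ∈ Finset.range m, z ^ n * (zbar * ω ^ j) ^ (m - 1 - n))
            * ω ^ (j * ℓ)) / (z ^ m - zbar ^ m) := by
    intro j hj
    rw [div_mul_eq_mul_div, div_eq_div_iff (hz j (Finset.mem_range.mp hj)) hzm, ← hSj j]
    ring
  rw [Finset.sum_congr rfl hterm, ← Finset.sum_div]
  congr 1
  -- numerator computation
  have expand : ∀ j ∈ Finset.range m,
      (z + zbar * ω ^ j) * (∑ n ∈ Finset.range m, z ^ n * (zbar * ω ^ j) ^ (m - 1 - n))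
          * ω ^ (j * ℓ)
        = ∑ n ∈ Finset.range m,
            (z ^ (n + 1) * zbar ^ (m - 1 - n) * ω ^ (j * ((m - 1 - n) + ℓ))
              + z ^ n * zbar ^ ((m - 1 - n) + 1) * ω ^ (j * ((m - 1 - n) + 1 + ℓ))) := by
    intro j hj
    rw [Finset.mul_sum, Finset.sum_mul]
    refine Finset.sum_congr rfl fun n hn => ?_
    ring
  rw [Finset.sum_congr rfl expand, Finset.sum_comm]
  have inner : ∀ n ∈ Finset.range m,
      (∑ j ∈ Finset.range m,
        (z ^ (n + 1) * zbar ^ (m - 1 - n) * ω ^ (j * ((m - 1 - n) + ℓ))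
          + z ^ n * zbar ^ ((m - 1 - n) + 1) * ω ^ (j * ((m - 1 - n) + 1 + ℓ))))
        = (if n = ℓ - 1 then (m : ℂ) * z ^ ℓ * zbar ^ (m - ℓ) else 0)
          + (if n = ℓ then (m : ℂ) * z ^ ℓ * zbar ^ (m - ℓ) else 0) := by
    intro n hn
    have hnm : n < m := Finset.mem_range.mp hn
    rw [Finset.sum_add_distrib, ← Finset.mul_sum, ← Finset.mul_sum, horth, horth]
    have hd1 : m ∣ ((m - 1 - n) + ℓ) ↔ n = ℓ - 1 := by
      constructor
      · rintro ⟨c, hc⟩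
        rcases c with _ | _ | c
        · omega
        · omega
        · have hmc : m * (c + 1 + 1) = m * c + m + m := by ring
          omega
      · intro h; exact ⟨1, by omega⟩
    have hd2 : m ∣ ((m - 1 - n) + 1 + ℓ) ↔ n = ℓ := by
      constructor
      · rintro ⟨c, hc⟩
        rcases c with _ | _ | c
        · omega
        · omega
        · have hmc : m * (c + 1 + 1) = m * c + m + m := by ring
          omega
      · intro h; exact ⟨1, by omega⟩
    rw [if_congr hd1 rfl rfl, if_congr hd2 rfl rfl]
    by_cases h1 : n = ℓ - 1
    · rw [if_pos h1]
      by_cases h2 : n = ℓ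
      · omega
      · rw [if_neg h2, if_pos h1, if_neg h2]
        have e1 : n + 1 = ℓ := by omega
        have e2 : m - 1 - n = m - ℓ := by omega
        rw [e1, e2]; ring
    · rw [if_neg h1]
      by_cases h2 : n = ℓ
      · rw [if_pos h2, if_neg h1, if_pos h2, h2]
        have e1 : (m - 1 - ℓ) + 1 = m - ℓ := by omega
        rw [e1]; ring
      · rw [if_neg h2, if_neg h1, if_neg h2]; ring
  rw [Finset.sum_congr rfl inner, Finset.sum_add_distrib,
    Finset.sum_ite_eq' (Finset.range m) (ℓ - 1), Finset.sum_ite_eq' (Finset.range m) ℓ,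
    if_pos (Finset.mem_range.mpr (by omega : ℓ - 1 < m)),
    if_pos (Finset.mem_range.mpr hlm)]
  ring
end

section
/- For real parameters κ and δ, define H(κ,δ) = Γ(1/2+κ)²/(Γ(1/2+κ+δ)·Γ(1/2+κ−δ)). Then H(κ,δ)·H(−κ,δ) + (sin(πδ)/cos(πκ))² = 1, provided −1/2 < κ < 1/2 and |δ| < 1/2 (so all Gamma arguments avoid nonpositive integers and cos(πκ) ≠ 0). -/
open Real

lemma gamma_ne_zero_aux {s : ℝ} (h1 : -(1:ℝ) < s) (h0 : s ≠ 0) :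
    Real.Gamma s ≠ 0 := by
  apply Real.Gamma_ne_zero
  intro m
  match m with
  | 0 => simpa using h0
  | (n+1) =>
    intro hs
    have : (-(((n:ℝ)+1)) : ℝ) ≤ -1 := by
      have : (0:ℝ) ≤ n := Nat.cast_nonneg n
      linarith
    rw [hs] at h1
    push_cast at h1 this
    linarith

lemma refl_aux (x : ℝ) :
    Real.Gamma (1/2 + x) * Real.Gamma (1/2 - x) = π / Real.cos (π * x) := by
  have := Real.Gamma_mul_Gamma_one_sub (1/2 + x)
  rw [show (1:ℝ) - (1/2 + x) = 1/2 - x by ring,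
    show π * (1/2 + x) = π/2 + π * x by ring, Real.sin_add] at this
  simpa using this

lemma sin_pi_div_two_add' (x : ℝ) : Real.sin (π/2 + x) = Real.cos x := by
  rw [Real.sin_add]; simp

lemma field_aux (g1 g2 a b c d C1 C2 ck p : ℝ)
    (hane : a ≠ 0) (hbne : b ≠ 0) (hcne : c ≠ 0) (hdne : d ≠ 0)
    (hC1 : C1 ≠ 0) (hC2 : C2 ≠ 0) (hck : ck ≠ 0) (hp : p ≠ 0)
    (e1 : a * d = p / C1) (e2 : b * c = p / C2) (e3 : g1 * g2 = p / ck) :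
    g1^2/(a*b) * (g2^2/(c*d)) = (C1 * C2) / ck^2 := by
  have step1 : g1^2/(a*b) * (g2^2/(c*d)) = (g1*g2)^2 / ((a*d)*(b*c)) := by
    field_simp
  rw [step1, e1, e2, e3]
  field_simp

theorem H_product_identity
    (kappa delta : ℝ)
    (hk : -(1/2) < kappa) (hk' : kappa < 1/2)
    (hd : -(1/2) < delta) (hd' : delta < 1/2)
    (H : ℝ → ℝ → ℝ)
    (hH : ∀ k d : ℝ, H k d = Real.Gamma (1/2 + k) ^ 2
        / (Real.Gamma (1/2 + k + d) * Real.Gamma (1/2 + k - d))) :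
    H kappa delta * H (-kappa) delta
      + (Real.sin (Real.pi * delta) / Real.cos (Real.pi * kappa)) ^ 2 = 1 := by
  have hpi := Real.pi_pos
  have hck : Real.cos (π * kappa) ≠ 0 := by
    have : 0 < Real.cos (π * kappa) := by
      apply Real.cos_pos_of_mem_Ioo
      constructor <;> nlinarith
    linarith
  by_cases h1 : kappa + delta = 1/2
  · have hz : Real.Gamma (1/2 + -kappa - delta) = 0 := by
      rw [show (1/2 : ℝ) + -kappa - delta = 0 by linarith, Real.Gamma_zero]
    rw [hH, hH, hz, mul_zero, div_zero, mul_zero, zero_add,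
      show π * delta = π/2 - π * kappa by rw [show delta = 1/2 - kappa by linarith]; ring,
      Real.sin_pi_div_two_sub, div_self hck, one_pow]
  by_cases h2 : kappa + delta = -(1/2)
  · have hz : Real.Gamma (1/2 + kappa + delta) = 0 := by
      rw [show (1/2 : ℝ) + kappa + delta = 0 by linarith, Real.Gamma_zero]
    rw [hH, hH, hz, zero_mul, div_zero, zero_mul, zero_add,
      show π * delta = -(π/2 + π * kappa) by rw [show delta = -(1/2) - kappa by linarith]; ring,
      Real.sin_neg, sin_pi_div_two_add', neg_div, neg_sq, div_self hck, one_pow]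
  by_cases h3 : kappa - delta = 1/2
  · have hz : Real.Gamma (1/2 + -kappa + delta) = 0 := by
      rw [show (1/2 : ℝ) + -kappa + delta = 0 by linarith, Real.Gamma_zero]
    rw [hH, hH, hz, zero_mul, div_zero, mul_zero, zero_add,
      show π * delta = -(π/2 - π * kappa) by rw [show delta = kappa - 1/2 by linarith]; ring,
      Real.sin_neg, Real.sin_pi_div_two_sub, neg_div, neg_sq, div_self hck, one_pow]
  by_cases h4 : kappa - delta = -(1/2)
  · have hz : Real.Gamma (1/2 + kappa - delta) = 0 := by
      rw [show (1/2 : ℝ) + kappa - delta = 0 by linarith, Real.Gamma_zero]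
    rw [hH, hH, hz, mul_zero, div_zero, zero_mul, zero_add,
      show π * delta = π/2 + π * kappa by rw [show delta = kappa + 1/2 by linarith]; ring,
      sin_pi_div_two_add', div_self hck, one_pow]
  -- generic case
  have hane : Real.Gamma (1/2 + kappa + delta) ≠ 0 :=
    gamma_ne_zero_aux (by linarith) (by intro h; apply h2; linarith)
  have hbne : Real.Gamma (1/2 + kappa - delta) ≠ 0 :=
    gamma_ne_zero_aux (by linarith) (by intro h; apply h4; linarith)
  have hcne : Real.Gamma (1/2 + -kappa + delta) ≠ 0 :=
    gamma_ne_zero_aux (by linarith) (by intro h; apply h3; linarith)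
  have hdne : Real.Gamma (1/2 + -kappa - delta) ≠ 0 :=
    gamma_ne_zero_aux (by linarith) (by intro h; apply h1; linarith)
  have e1 : Real.Gamma (1/2 + kappa + delta) * Real.Gamma (1/2 + -kappa - delta)
      = π / Real.cos (π * (kappa + delta)) := by
    have := refl_aux (kappa + delta)
    rw [show (1/2 : ℝ) + (kappa + delta) = 1/2 + kappa + delta by ring,
      show (1/2 : ℝ) - (kappa + delta) = 1/2 + -kappa - delta by ring] at this
    exact this
  have e2 : Real.Gamma (1/2 + kappa - delta) * Real.Gamma (1/2 + -kappa + delta)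
      = π / Real.cos (π * (kappa - delta)) := by
    have := refl_aux (kappa - delta)
    rw [show (1/2 : ℝ) + (kappa - delta) = 1/2 + kappa - delta by ring,
      show (1/2 : ℝ) - (kappa - delta) = 1/2 + -kappa + delta by ring] at this
    exact this
  have e3 : Real.Gamma (1/2 + kappa) * Real.Gamma (1/2 + -kappa)
      = π / Real.cos (π * kappa) := by
    have := refl_aux kappa
    rw [show (1/2 : ℝ) - kappa = 1/2 + -kappa by ring] at this
    exact this
  have hC1 : Real.cos (π * (kappa + delta)) ≠ 0 := by
    intro h
    rw [h, div_zero] at e1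
    exact mul_ne_zero hane hdne e1
  have hC2 : Real.cos (π * (kappa - delta)) ≠ 0 := by
    intro h
    rw [h, div_zero] at e2
    exact mul_ne_zero hbne hcne e2
  have key : Real.cos (π * (kappa + delta)) * Real.cos (π * (kappa - delta))
      = Real.cos (π * kappa) ^ 2 - Real.sin (π * delta) ^ 2 := by
    rw [show π * (kappa + delta) = π * kappa + π * delta by ring,
      show π * (kappa - delta) = π * kappa - π * delta by ring,
      Real.cos_add, Real.cos_sub]
    nlinarith [Real.sin_sq_add_cos_sq (π * kappa), Real.sin_sq_add_cos_sq (π * delta)]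
  have hprod : H kappa delta * H (-kappa) delta
      = (Real.cos (π * (kappa + delta)) * Real.cos (π * (kappa - delta)))
        / Real.cos (π * kappa) ^ 2 := by
    rw [hH, hH]
    exact field_aux _ _ _ _ _ _ _ _ _ _ hane hbne hcne hdne hC1 hC2 hck
      (ne_of_gt hpi) e1 e2 e3
  rw [hprod, key, div_pow, ← add_div, sub_add_cancel,
    div_self (pow_ne_zero 2 hck)]
end

section
/- For real κ, δ with −1/2 < κ < 1/2 and 0 < δ < 1/2, and with H(κ,δ) = Γ(1/2+κ)²/(Γ(1/2+κ+δ)Γ(1/2+κ−δ)), the following trigonometric identity holds: H(κ,δ)·H(−κ,δ) = cos(π(κ+δ))·cos(π(κ−δ))/cos²(πκ). -/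
theorem H_product_trig
    (kappa delta : ℝ)
    (hk : -(1/2) < kappa) (hk' : kappa < 1/2)
    (hd : 0 < delta) (hd' : delta < 1/2)
    (H : ℝ → ℝ → ℝ)
    (hH : ∀ k d : ℝ, H k d = Real.Gamma (1/2 + k) ^ 2
        / (Real.Gamma (1/2 + k + d) * Real.Gamma (1/2 + k - d))) :
    H kappa delta * H (-kappa) delta
      = Real.cos (Real.pi * (kappa + delta)) * Real.cos (Real.pi * (kappa - delta))
        / Real.cos (Real.pi * kappa) ^ 2 := by
  have hpi := Real.pi_pos
  rw [hH, hH]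
  have refl : ∀ x : ℝ, Real.Gamma (1/2 + x) * Real.Gamma (1/2 - x)
      = Real.pi / Real.cos (Real.pi * x) := by
    intro x
    have h := Real.Gamma_mul_Gamma_one_sub (1/2 + x)
    have h2 : (1 : ℝ) - (1/2 + x) = 1/2 - x := by ring
    have h3 : Real.sin (Real.pi * (1/2 + x)) = Real.cos (Real.pi * x) := by
      have h4 : Real.pi * (1/2 + x) = Real.pi / 2 + Real.pi * x := by ring
      rw [h4, Real.sin_add]
      simp
    rw [h2, h3] at h
    exact h
  by_cases hc1 : kappa + delta = 1/2
  · have e1 : (1/2 : ℝ) + -kappa - delta = 0 := by linarith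
    have e2 : Real.pi * (kappa + delta) = Real.pi / 2 := by rw [hc1]; ring
    rw [e1, Real.Gamma_zero, mul_zero, div_zero, mul_zero, e2,
      Real.cos_pi_div_two, zero_mul, zero_div]
  by_cases hc2 : kappa - delta = -(1/2)
  · have e1 : (1/2 : ℝ) + kappa - delta = 0 := by linarith
    have e2 : Real.pi * (kappa - delta) = -(Real.pi / 2) := by rw [hc2]; ring
    rw [e1, Real.Gamma_zero, mul_zero, div_zero, zero_mul, e2,
      Real.cos_neg, Real.cos_pi_div_two, mul_zero, zero_div]
  -- nondegenerate case
  have h1 : Real.Gamma (1/2 + kappa) * Real.Gamma (1/2 + -kappa)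
      = Real.pi / Real.cos (Real.pi * kappa) := by
    rw [show (1/2 : ℝ) + -kappa = 1/2 - kappa by ring]
    exact refl kappa
  have h2 : Real.Gamma (1/2 + kappa + delta) * Real.Gamma (1/2 + -kappa - delta)
      = Real.pi / Real.cos (Real.pi * (kappa + delta)) := by
    rw [show (1/2 : ℝ) + kappa + delta = 1/2 + (kappa + delta) by ring,
        show (1/2 : ℝ) + -kappa - delta = 1/2 - (kappa + delta) by ring]
    exact refl (kappa + delta)
  have h3 : Real.Gamma (1/2 + kappa - delta) * Real.Gamma (1/2 + -kappa + delta)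
      = Real.pi / Real.cos (Real.pi * (kappa - delta)) := by
    rw [show (1/2 : ℝ) + kappa - delta = 1/2 + (kappa - delta) by ring,
        show (1/2 : ℝ) + -kappa + delta = 1/2 - (kappa - delta) by ring]
    exact refl (kappa - delta)
  have hpos : ∀ x : ℝ, -(1/2) < x → x < 1/2 → Real.cos (Real.pi * x) ≠ 0 := by
    intro x h h'
    have hc : 0 < Real.cos (Real.pi * x) := by
      apply Real.cos_pos_of_mem_Ioo
      rw [Set.mem_Ioo]
      constructor <;> nlinarith
    linarith
  have hneg : ∀ x : ℝ, 1/2 < x → x < 1 → Real.cos (Real.pi * x) ≠ 0 := by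
    intro x h h'
    have hc : Real.cos (Real.pi * x) < 0 := by
      apply Real.cos_neg_of_pi_div_two_lt_of_lt <;> nlinarith
    linarith
  have hcκ : Real.cos (Real.pi * kappa) ≠ 0 := hpos kappa hk hk'
  have hcp : Real.cos (Real.pi * (kappa + delta)) ≠ 0 := by
    rcases lt_or_gt_of_ne hc1 with h | h
    · exact hpos _ (by linarith) h
    · exact hneg _ h (by linarith)
  have hcm : Real.cos (Real.pi * (kappa - delta)) ≠ 0 := by
    rcases lt_or_gt_of_ne hc2 with h | h
    · have he : Real.cos (Real.pi * (kappa - delta))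
          = Real.cos (Real.pi * (-(kappa - delta))) := by
        rw [show Real.pi * (-(kappa - delta)) = -(Real.pi * (kappa - delta)) by ring,
          Real.cos_neg]
      rw [he]
      exact hneg _ (by linarith) (by linarith)
    · exact hpos _ h (by linarith)
  have key : Real.Gamma (1/2 + kappa) ^ 2
        / (Real.Gamma (1/2 + kappa + delta) * Real.Gamma (1/2 + kappa - delta))
      * (Real.Gamma (1/2 + -kappa) ^ 2
        / (Real.Gamma (1/2 + -kappa + delta) * Real.Gamma (1/2 + -kappa - delta)))
      = (Real.Gamma (1/2 + kappa) * Real.Gamma (1/2 + -kappa)) ^ 2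
        / ((Real.Gamma (1/2 + kappa + delta) * Real.Gamma (1/2 + -kappa - delta))
          * (Real.Gamma (1/2 + kappa - delta) * Real.Gamma (1/2 + -kappa + delta))) := by
    rw [div_mul_div_comm]
    ring_nf
  rw [key, h1, h2, h3]
  have hπ : Real.pi ≠ 0 := ne_of_gt hpi
  field_simp
end

section
/- For real κ with −1/2 < κ < 1/2 and real δ with 0 ≤ δ < 1/2, ∫_0^1 v^{κ} (1−v)^{−κ} ₂F₁(δ,−δ;1/2+κ;v) · ₂F₁(δ,−δ;1/2−κ;1−v) · (v(1−v))^{−1/2} dv = Γ(1/2+κ)Γ(1/2−κ) · ∑_{i,j≥0} (δ)_i(−δ)_i(δ)_j(−δ)_j / (i! j! (i+j)!). -/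
open MeasureTheory Set

lemma my_gamma_poch {x : ℝ} (hx : 0 < x) (n : ℕ) :
    Real.Gamma (x + n) = Real.Gamma x * (ascPochhammer ℝ n).eval x := by
  induction n with
  | zero => simp
  | succ n ih =>
      have hxn : x + n ≠ 0 := by positivity
      have h : (x + (n+1:ℕ) : ℝ) = (x + n) + 1 := by push_cast; ring
      rw [h, Real.Gamma_add_one hxn, ih, ascPochhammer_succ_eval]
      ring

lemma my_cpow_eq {s t : ℝ} (x : ℝ) (h0 : 0 ≤ x) (h1 : x ≤ 1) :
    (x:ℂ) ^ ((s:ℂ) - 1) * ((1:ℂ) - (x:ℂ)) ^ ((t:ℂ) - 1)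
      = ((x ^ (s - 1) * (1 - x) ^ (t - 1) : ℝ) : ℂ) := by
  have h1' : (0:ℝ) ≤ 1 - x := by linarith
  rw [Complex.ofReal_mul, Complex.ofReal_cpow h0, Complex.ofReal_cpow h1']
  push_cast
  ring

lemma my_beta_integrable {s t : ℝ} (hs : 0 < s) (ht : 0 < t) :
    IntervalIntegrable (fun v : ℝ => v ^ (s - 1) * (1 - v) ^ (t - 1)) volume 0 1 := by
  have hc : IntervalIntegrable (fun x : ℝ => (x : ℂ) ^ ((s : ℂ) - 1) * ((1 : ℂ) - x) ^ ((t : ℂ) - 1)) volume 0 1 :=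
    Complex.betaIntegral_convergent (by simpa using hs) (by simpa using ht)
  rw [intervalIntegrable_iff_integrableOn_Ioc_of_le zero_le_one] at hc ⊢
  refine MeasureTheory.IntegrableOn.congr_fun hc.re (fun x hx => ?_) measurableSet_Ioc
  have h := my_cpow_eq (s := s) (t := t) x (le_of_lt hx.1) hx.2
  show (((x:ℂ) ^ ((s:ℂ) - 1) * ((1:ℂ) - (x:ℂ)) ^ ((t:ℂ) - 1)).re) = _
  rw [h, Complex.ofReal_re]

lemma my_realBeta {s t : ℝ} (hs : 0 < s) (ht : 0 < t) :
    ∫ v in (0:ℝ)..1, v ^ (s - 1) * (1 - v) ^ (t - 1)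
      = Real.Gamma s * Real.Gamma t / Real.Gamma (s + t) := by
  have key : Complex.Gamma s * Complex.Gamma t
      = Complex.Gamma (s + t) * Complex.betaIntegral s t :=
    Complex.Gamma_mul_Gamma_eq_betaIntegral (by simpa using hs) (by simpa using ht)
  have hbeta : Complex.betaIntegral s t
      = ((∫ v in (0:ℝ)..1, v ^ (s - 1) * (1 - v) ^ (t - 1) : ℝ) : ℂ) := by
    rw [Complex.betaIntegral, ← intervalIntegral.integral_ofReal]
    refine intervalIntegral.integral_congr fun x hx => ?_
    rw [uIcc_of_le zero_le_one] at hx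
    exact my_cpow_eq x hx.1 hx.2
  have hΓ : Real.Gamma (s + t) ≠ 0 := (Real.Gamma_pos_of_pos (by linarith)).ne'
  rw [hbeta, ← Complex.ofReal_add, Complex.Gamma_ofReal, Complex.Gamma_ofReal,
    Complex.Gamma_ofReal, ← Complex.ofReal_mul, ← Complex.ofReal_mul] at key
  have h3 := Complex.ofReal_injective key
  field_simp
  linarith [h3]

lemma my_P_core {d : ℝ} (hd0 : 0 ≤ d) (hd1 : d ≤ 1) : ∀ k : ℕ,
    |(ascPochhammer ℝ (k+1)).eval d * (ascPochhammer ℝ (k+1)).eval (-d)|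
      ≤ ((k.factorial : ℝ))^2 := by
  intro k
  induction k with
  | zero =>
      rw [zero_add, ascPochhammer_one]
      simp only [Polynomial.eval_X, Nat.factorial_zero]
      rw [abs_mul, abs_neg, abs_of_nonneg hd0]
      push_cast
      nlinarith
  | succ k ih =>
      rw [ascPochhammer_succ_eval (k+1) d, ascPochhammer_succ_eval (k+1) (-d)]
      have hc : (1:ℝ) ≤ ((k+1 : ℕ) : ℝ) := by exact_mod_cast Nat.one_le_iff_ne_zero.mpr (Nat.succ_ne_zero k)
      have h1 : |(d + ((k+1:ℕ):ℝ)) * (-d + ((k+1:ℕ):ℝ))| ≤ (((k+1:ℕ):ℝ))^2 := by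
        rw [abs_of_nonneg (by nlinarith)]
        nlinarith
      calc |(ascPochhammer ℝ (k+1)).eval d * (d + ((k+1:ℕ):ℝ)) *
              ((ascPochhammer ℝ (k+1)).eval (-d) * (-d + ((k+1:ℕ):ℝ)))|
          = |(ascPochhammer ℝ (k+1)).eval d * (ascPochhammer ℝ (k+1)).eval (-d)|
              * |(d + ((k+1:ℕ):ℝ)) * (-d + ((k+1:ℕ):ℝ))| := by
            rw [← abs_mul]; ring_nf
        _ ≤ ((k.factorial : ℝ))^2 * (((k+1:ℕ):ℝ))^2 := by
            apply mul_le_mul ih h1 (abs_nonneg _) (by positivity)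
        _ = (((k+1).factorial : ℝ))^2 := by
            rw [Nat.factorial_succ]; push_cast; ring

lemma my_poch_lb {a : ℝ} (ha : 0 < a) : ∀ k : ℕ,
    a * (k.factorial : ℝ) ≤ (ascPochhammer ℝ (k+1)).eval a := by
  intro k
  induction k with
  | zero => simp [ascPochhammer_one]
  | succ k ih =>
      rw [ascPochhammer_succ_eval (k+1) a]
      have hc : (0:ℝ) < ((k+1:ℕ):ℝ) := by positivity
      have h2 : ((k+1:ℕ):ℝ) ≤ a + ((k+1:ℕ):ℝ) := by linarith
      calc a * ((k+1).factorial : ℝ) = (a * (k.factorial:ℝ)) * ((k+1:ℕ):ℝ) := by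
            rw [Nat.factorial_succ]; push_cast; ring
        _ ≤ (ascPochhammer ℝ (k+1)).eval a * (a + ((k+1:ℕ):ℝ)) := by
            apply mul_le_mul ih h2 (le_of_lt hc) (le_trans (by positivity) ih)

-- uniform bound with (i+1)^2 factor
lemma my_P_bound' {d : ℝ} (hd0 : 0 ≤ d) (hd1 : d ≤ 1) (i : ℕ) :
    |(ascPochhammer ℝ i).eval d * (ascPochhammer ℝ i).eval (-d)| * ((i:ℝ)+1)^2
      ≤ 4 * ((i.factorial : ℝ))^2 := by
  cases i with
  | zero => simp
  | succ k =>
      have h1 := my_P_core hd0 hd1 k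
      have h2 : (((k+1:ℕ):ℝ)+1)^2 ≤ 4 * (((k+1:ℕ):ℝ))^2 := by push_cast; nlinarith [Nat.cast_nonneg (α := ℝ) k]
      calc |(ascPochhammer ℝ (k+1)).eval d * (ascPochhammer ℝ (k+1)).eval (-d)| * (((k+1:ℕ):ℝ)+1)^2
          ≤ ((k.factorial:ℝ))^2 * (4 * (((k+1:ℕ):ℝ))^2) :=
            mul_le_mul h1 h2 (by positivity) (by positivity)
        _ = 4 * (((k+1).factorial : ℝ))^2 := by rw [Nat.factorial_succ]; push_cast; ring

lemma my_coef_bound {d a : ℝ} (hd0 : 0 ≤ d) (hd1 : d ≤ 1) (ha : 0 < a) (i : ℕ) :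
    |(ascPochhammer ℝ i).eval d * (ascPochhammer ℝ i).eval (-d)|
      ≤ (1/a + 1) * ((ascPochhammer ℝ i).eval a * (i.factorial : ℝ)) := by
  cases i with
  | zero =>
      have : (0:ℝ) < 1/a := by positivity
      simp only [ascPochhammer_zero, Polynomial.eval_one, Nat.factorial_zero, Nat.cast_one,
        mul_one, one_mul, abs_one]
      linarith
  | succ k =>
      have h1 := my_P_core hd0 hd1 k
      have h2 := my_poch_lb ha k
      have hfk : (0:ℝ) < (k.factorial : ℝ) := by exact_mod_cast k.factorial_pos
      have hfk1 : (k.factorial : ℝ) ≤ ((k+1).factorial : ℝ) := by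
        exact_mod_cast Nat.factorial_le (Nat.le_succ k)
      have hpoch : (0:ℝ) < (ascPochhammer ℝ (k+1)).eval a := ascPochhammer_pos _ _ ha
      have hfk1' : (0:ℝ) < ((k+1).factorial : ℝ) := by exact_mod_cast (k+1).factorial_pos
      calc |(ascPochhammer ℝ (k+1)).eval d * (ascPochhammer ℝ (k+1)).eval (-d)|
          ≤ ((k.factorial:ℝ))^2 := h1
        _ ≤ (k.factorial:ℝ) * ((k+1).factorial : ℝ) := by nlinarith
        _ = (1/a) * ((a * (k.factorial:ℝ)) * ((k+1).factorial : ℝ)) := by field_simp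
        _ ≤ (1/a) * ((ascPochhammer ℝ (k+1)).eval a * ((k+1).factorial : ℝ)) := by
            apply mul_le_mul_of_nonneg_left (mul_le_mul_of_nonneg_right h2 (le_of_lt hfk1')) (by positivity)
        _ ≤ (1/a + 1) * ((ascPochhammer ℝ (k+1)).eval a * ((k+1).factorial : ℝ)) := by nlinarith
lemma my_inv_sq_summable : Summable (fun n : ℕ => 1 / ((n:ℝ)+1)^2) := by
  have h : Summable (fun n : ℕ => 1 / ((n:ℝ))^2) := Real.summable_one_div_nat_pow.mpr one_lt_two
  have h2 := (summable_nat_add_iff (f := fun n : ℕ => 1 / ((n:ℝ))^2) 1).mpr h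
  refine h2.congr fun n => ?_
  push_cast
  ring

lemma my_summable_T {d : ℝ} (hd0 : 0 ≤ d) (hd1 : d ≤ 1) :
    Summable (fun p : ℕ × ℕ =>
      |(ascPochhammer ℝ p.1).eval d * (ascPochhammer ℝ p.1).eval (-d)|
        * |(ascPochhammer ℝ p.2).eval d * (ascPochhammer ℝ p.2).eval (-d)|
        / ((p.1.factorial : ℝ) * (p.2.factorial : ℝ) * ((p.1+p.2).factorial : ℝ))) := by
  have hM : Summable (fun p : ℕ × ℕ => (16:ℝ) * (1/((p.1:ℝ)+1)^2 * (1/((p.2:ℝ)+1)^2))) :=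
    (Summable.mul_of_nonneg my_inv_sq_summable my_inv_sq_summable
      (fun n => by positivity) (fun n => by positivity)).mul_left 16
  refine Summable.of_nonneg_of_le (fun p => by positivity) (fun p => ?_) hM
  obtain ⟨i, j⟩ := p
  dsimp only
  set A := |(ascPochhammer ℝ i).eval d * (ascPochhammer ℝ i).eval (-d)| with hA
  set B := |(ascPochhammer ℝ j).eval d * (ascPochhammer ℝ j).eval (-d)| with hB
  set F := (i.factorial : ℝ) with hF'
  set G := (j.factorial : ℝ) with hG'
  set H := ((i+j).factorial : ℝ) with hH'
  set x := ((i:ℝ)+1)^2 with hx'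
  set y := ((j:ℝ)+1)^2 with hy'
  have hAnn : 0 ≤ A := abs_nonneg _
  have hBnn : 0 ≤ B := abs_nonneg _
  have h1 : A * x ≤ 4 * F^2 := my_P_bound' hd0 hd1 i
  have h2 : B * y ≤ 4 * G^2 := my_P_bound' hd0 hd1 j
  have h3 : F * G ≤ H := by
    rw [hF', hG', hH']
    exact_mod_cast Nat.le_of_dvd (i+j).factorial_pos
      (Nat.factorial_mul_factorial_dvd_factorial_add i j)
  have hF : (0:ℝ) < F := by rw [hF']; exact_mod_cast i.factorial_pos
  have hG : (0:ℝ) < G := by rw [hG']; exact_mod_cast j.factorial_pos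
  have hH : (0:ℝ) < H := by rw [hH']; exact_mod_cast (i+j).factorial_pos
  have hx : (0:ℝ) < x := by positivity
  have hy : (0:ℝ) < y := by positivity
  have key : A * B * (x * y) ≤ 16 * (F * G * H) := by
    calc A * B * (x * y) = (A * x) * (B * y) := by ring
      _ ≤ (4 * F^2) * (4 * G^2) := mul_le_mul h1 h2 (by positivity) (by positivity)
      _ = 16 * ((F * G) * (F * G)) := by ring
      _ ≤ 16 * ((F * G) * H) := by
          apply mul_le_mul_of_nonneg_left (mul_le_mul_of_nonneg_left h3 (by positivity)) (by norm_num)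
      _ = 16 * (F * G * H) := by ring
  have hxy : (16:ℝ) * (1/x * (1/y)) = 16 * (F * G * H) / (F * G * H) / (x * y) * 1 := by
    field_simp
  rw [show (16:ℝ) * (1/x * (1/y)) = 16 * (F*G*H) / ((F*G*H) * (x*y)) by field_simp]
  rw [div_le_div_iff₀ (by positivity) (by positivity)]
  calc A * B * ((F*G*H) * (x*y)) = (A*B*(x*y)) * (F*G*H) := by ring
    _ ≤ (16 * (F*G*H)) * (F*G*H) := mul_le_mul_of_nonneg_right key (by positivity)

lemma my_main {a b delta : ℝ} (ha : 0 < a) (hb : 0 < b) (hab : a + b = 1)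
    (hd0 : 0 ≤ delta) (hd1 : delta ≤ 1) :
    ∫ v in Set.Ioo (0:ℝ) 1,
        (v ^ (a-1) * (1-v) ^ (b-1))
          * ((∑' i : ℕ, (ascPochhammer ℝ i).eval delta * (ascPochhammer ℝ i).eval (-delta)
              / ((ascPochhammer ℝ i).eval a * (Nat.factorial i)) * v ^ i)
          * (∑' j : ℕ, (ascPochhammer ℝ j).eval delta * (ascPochhammer ℝ j).eval (-delta)
              / ((ascPochhammer ℝ j).eval b * (Nat.factorial j)) * (1 - v) ^ j))
      = Real.Gamma a * Real.Gamma b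
        * ∑' p : ℕ × ℕ, (ascPochhammer ℝ p.1).eval delta * (ascPochhammer ℝ p.1).eval (-delta)
            * ((ascPochhammer ℝ p.2).eval delta * (ascPochhammer ℝ p.2).eval (-delta))
            / ((Nat.factorial p.1) * (Nat.factorial p.2) * (Nat.factorial (p.1 + p.2))) := by
  set G : ℕ × ℕ → ℝ → ℝ := fun p v =>
    ((ascPochhammer ℝ p.1).eval delta * (ascPochhammer ℝ p.1).eval (-delta)
        / ((ascPochhammer ℝ p.1).eval a * (Nat.factorial p.1)))
    * ((ascPochhammer ℝ p.2).eval delta * (ascPochhammer ℝ p.2).eval (-delta)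
        / ((ascPochhammer ℝ p.2).eval b * (Nat.factorial p.2)))
    * (v ^ (a - 1 + (p.1:ℝ)) * (1 - v) ^ (b - 1 + (p.2:ℝ))) with hG
  -- Beta integral facts over Ioo
  have beta_Ioo : ∀ s t : ℝ, 0 < s → 0 < t →
      ∫ v in Set.Ioo (0:ℝ) 1, v ^ (s-1) * (1-v) ^ (t-1)
        = Real.Gamma s * Real.Gamma t / Real.Gamma (s+t) := by
    intro s t hs ht
    rw [← MeasureTheory.integral_Ioc_eq_integral_Ioo,
      ← intervalIntegral.integral_of_le zero_le_one]
    exact my_realBeta hs ht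
  have betaInt_Ioo : ∀ s t : ℝ, 0 < s → 0 < t →
      MeasureTheory.IntegrableOn (fun v : ℝ => v ^ (s-1) * (1-v) ^ (t-1))
        (Set.Ioo 0 1) MeasureTheory.volume := fun s t hs ht =>
    ((intervalIntegrable_iff_integrableOn_Ioc_of_le zero_le_one).mp
      (my_beta_integrable hs ht)).mono_set Set.Ioo_subset_Ioc_self
  -- positivity facts
  have hpa : ∀ i : ℕ, (0:ℝ) < (ascPochhammer ℝ i).eval a := fun i => ascPochhammer_pos i a ha
  have hpb : ∀ j : ℕ, (0:ℝ) < (ascPochhammer ℝ j).eval b := fun j => ascPochhammer_pos j b hb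
  have hfac : ∀ n : ℕ, (0:ℝ) < (n.factorial : ℝ) := fun n => by exact_mod_cast n.factorial_pos
  have hsab : ∀ i j : ℕ, (a + i) + (b + j) = ((i + j : ℕ) : ℝ) + 1 := by
    intro i j; push_cast; linarith
  -- step 3: value of each integral
  have step3 : ∀ p : ℕ × ℕ, ∫ v in Set.Ioo (0:ℝ) 1, G p v
      = Real.Gamma a * Real.Gamma b
        * ((ascPochhammer ℝ p.1).eval delta * (ascPochhammer ℝ p.1).eval (-delta)
            * ((ascPochhammer ℝ p.2).eval delta * (ascPochhammer ℝ p.2).eval (-delta))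
            / ((Nat.factorial p.1) * (Nat.factorial p.2) * (Nat.factorial (p.1 + p.2)))) := by
    rintro ⟨i, j⟩
    rw [hG]
    dsimp only
    rw [MeasureTheory.integral_const_mul,
      show (fun v : ℝ => v ^ (a - 1 + (i:ℝ)) * (1 - v) ^ (b - 1 + (j:ℝ)))
        = (fun v : ℝ => v ^ ((a + i) - 1) * (1 - v) ^ ((b + j) - 1)) by
          funext v; ring_nf,
      beta_Ioo (a + i) (b + j) (by positivity) (by positivity),
      hsab i j, Real.Gamma_nat_eq_factorial,
      my_gamma_poch ha i, my_gamma_poch hb j]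
    have h1 : (ascPochhammer ℝ i).eval a ≠ 0 := (hpa i).ne'
    have h2 : (ascPochhammer ℝ j).eval b ≠ 0 := (hpb j).ne'
    have h3 : ((i.factorial : ℝ)) ≠ 0 := (hfac i).ne'
    have h4 : ((j.factorial : ℝ)) ≠ 0 := (hfac j).ne'
    have h5 : (((i+j).factorial : ℝ)) ≠ 0 := (hfac (i+j)).ne'
    field_simp
  -- step 2 : integrability
  have step2 : ∀ p : ℕ × ℕ, MeasureTheory.Integrable (G p)
      (MeasureTheory.volume.restrict (Set.Ioo (0:ℝ) 1)) := by
    rintro ⟨i, j⟩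
    rw [hG]
    dsimp only
    have h := (betaInt_Ioo (a + i) (b + j) (by positivity) (by positivity)).const_mul
      ((ascPochhammer ℝ i).eval delta * (ascPochhammer ℝ i).eval (-delta)
          / ((ascPochhammer ℝ i).eval a * (Nat.factorial i))
        * ((ascPochhammer ℝ j).eval delta * (ascPochhammer ℝ j).eval (-delta)
          / ((ascPochhammer ℝ j).eval b * (Nat.factorial j))))
    refine h.congr (Filter.Eventually.of_forall fun v => ?_)
    ring_nf
  -- step 3' : norm values
  have step3' : ∀ p : ℕ × ℕ, (∫ v in Set.Ioo (0:ℝ) 1, ‖G p v‖)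
      = Real.Gamma a * Real.Gamma b
        * (|(ascPochhammer ℝ p.1).eval delta * (ascPochhammer ℝ p.1).eval (-delta)|
            * |(ascPochhammer ℝ p.2).eval delta * (ascPochhammer ℝ p.2).eval (-delta)|
            / ((Nat.factorial p.1) * (Nat.factorial p.2) * (Nat.factorial (p.1 + p.2)))) := by
    rintro ⟨i, j⟩
    have heq : ∀ v ∈ Set.Ioo (0:ℝ) 1, ‖G (i,j) v‖
        = (|(ascPochhammer ℝ i).eval delta * (ascPochhammer ℝ i).eval (-delta)|
            / ((ascPochhammer ℝ i).eval a * (Nat.factorial i)))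
          * (|(ascPochhammer ℝ j).eval delta * (ascPochhammer ℝ j).eval (-delta)|
            / ((ascPochhammer ℝ j).eval b * (Nat.factorial j)))
          * (v ^ (a - 1 + (i:ℝ)) * (1 - v) ^ (b - 1 + (j:ℝ))) := by
      intro v hv
      have hv0 : (0:ℝ) < v := hv.1
      have h1v : (0:ℝ) < 1 - v := by linarith [hv.2]
      rw [hG]
      dsimp only
      rw [Real.norm_eq_abs, abs_mul, abs_mul, abs_div, abs_div,
        abs_of_pos (mul_pos (hpa i) (hfac i)), abs_of_pos (mul_pos (hpb j) (hfac j)),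
        abs_of_pos (mul_pos (Real.rpow_pos_of_pos hv0 _) (Real.rpow_pos_of_pos h1v _))]
    rw [MeasureTheory.setIntegral_congr_fun measurableSet_Ioo heq,
      MeasureTheory.integral_const_mul,
      show (fun v : ℝ => v ^ (a - 1 + (i:ℝ)) * (1 - v) ^ (b - 1 + (j:ℝ)))
        = (fun v : ℝ => v ^ ((a + i) - 1) * (1 - v) ^ ((b + j) - 1)) by
          funext v; ring_nf,
      beta_Ioo (a + i) (b + j) (by positivity) (by positivity),
      hsab i j, Real.Gamma_nat_eq_factorial,
      my_gamma_poch ha i, my_gamma_poch hb j]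
    have h1 : (ascPochhammer ℝ i).eval a ≠ 0 := (hpa i).ne'
    have h2 : (ascPochhammer ℝ j).eval b ≠ 0 := (hpb j).ne'
    have h3 : ((i.factorial : ℝ)) ≠ 0 := (hfac i).ne'
    have h4 : ((j.factorial : ℝ)) ≠ 0 := (hfac j).ne'
    have h5 : (((i+j).factorial : ℝ)) ≠ 0 := (hfac (i+j)).ne'
    field_simp
  -- step 4 : summability of norm integrals
  have step4 : Summable (fun p : ℕ × ℕ => ∫ v in Set.Ioo (0:ℝ) 1, ‖G p v‖) := by
    refine Summable.congr (((my_summable_T hd0 hd1).mul_left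
      (Real.Gamma a * Real.Gamma b))) (fun p => (step3' p).symm)
  -- step 1 : pointwise expansion of the integrand
  have step1 : Set.EqOn
      (fun v : ℝ => (v ^ (a-1) * (1-v) ^ (b-1))
          * ((∑' i : ℕ, (ascPochhammer ℝ i).eval delta * (ascPochhammer ℝ i).eval (-delta)
              / ((ascPochhammer ℝ i).eval a * (Nat.factorial i)) * v ^ i)
          * (∑' j : ℕ, (ascPochhammer ℝ j).eval delta * (ascPochhammer ℝ j).eval (-delta)
              / ((ascPochhammer ℝ j).eval b * (Nat.factorial j)) * (1 - v) ^ j)))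
      (fun v => ∑' p : ℕ × ℕ, G p v) (Set.Ioo 0 1) := by
    intro v hv
    have hv0 : (0:ℝ) < v := hv.1
    have h1v : (0:ℝ) < 1 - v := by linarith [hv.2]
    dsimp only
    have hcoef : ∀ (c : ℝ) (hc : 0 < c) (w : ℝ) (hw0 : 0 < w) (hw1 : w < 1),
        Summable (fun i : ℕ => ‖(ascPochhammer ℝ i).eval delta * (ascPochhammer ℝ i).eval (-delta)
            / ((ascPochhammer ℝ i).eval c * (Nat.factorial i)) * w ^ i‖) := by
      intro c hc w hw0 hw1
      refine Summable.of_nonneg_of_le (fun i => norm_nonneg _) (fun i => ?_)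
        ((summable_geometric_of_lt_one hw0.le hw1).mul_left (1/c + 1))
      have hden : (0:ℝ) < (ascPochhammer ℝ i).eval c * (Nat.factorial i) :=
        mul_pos (ascPochhammer_pos i c hc) (hfac i)
      rw [norm_mul, norm_div, Real.norm_eq_abs, Real.norm_eq_abs, Real.norm_eq_abs,
        abs_of_pos hden, abs_of_pos (pow_pos hw0 i)]
      refine mul_le_mul_of_nonneg_right ?_ (pow_pos hw0 i).le
      rw [div_le_iff₀ hden]
      exact my_coef_bound hd0 hd1 hc i
    have hfa := hcoef a ha v hv0 hv.2
    have hfb := hcoef b hb (1 - v) h1v (by linarith [hv.1])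
    rw [tsum_mul_tsum_of_summable_norm hfa hfb, ← tsum_mul_left]
    refine tsum_congr fun p => ?_
    rw [hG]
    dsimp only
    rw [Real.rpow_add hv0 (a-1) (p.1:ℝ), Real.rpow_add h1v (b-1) (p.2:ℝ),
      Real.rpow_natCast, Real.rpow_natCast]
    ring
  -- assemble
  rw [MeasureTheory.setIntegral_congr_fun measurableSet_Ioo step1,
    ← MeasureTheory.integral_tsum_of_summable_integral_norm step2 step4,
    tsum_congr step3, tsum_mul_left]

theorem integral_f1_product
    (kappa delta : ℝ)
    (hk : -(1/2) < kappa) (hk' : kappa < 1/2)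
    (hd : 0 ≤ delta) (hd' : delta < 1/2) :
    ∫ v in (0:ℝ)..1,
        v ^ kappa * (1 - v) ^ (-kappa)
          * (∑' i : ℕ, (ascPochhammer ℝ i).eval delta
              * (ascPochhammer ℝ i).eval (-delta)
              / ((ascPochhammer ℝ i).eval (1/2 + kappa) * (Nat.factorial i)) * v ^ i)
          * (∑' j : ℕ, (ascPochhammer ℝ j).eval delta
              * (ascPochhammer ℝ j).eval (-delta)
              / ((ascPochhammer ℝ j).eval (1/2 - kappa) * (Nat.factorial j)) * (1 - v) ^ j)
          * (v * (1 - v)) ^ (-(1:ℝ)/2)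
      = Real.Gamma (1/2 + kappa) * Real.Gamma (1/2 - kappa)
        * ∑' p : ℕ × ℕ,
            (ascPochhammer ℝ p.1).eval delta * (ascPochhammer ℝ p.1).eval (-delta)
            * (ascPochhammer ℝ p.2).eval delta * (ascPochhammer ℝ p.2).eval (-delta)
            / ((Nat.factorial p.1) * (Nat.factorial p.2) * (Nat.factorial (p.1 + p.2))) := by
  have ha : (0:ℝ) < 1/2 + kappa := by linarith
  have hb : (0:ℝ) < 1/2 - kappa := by linarith
  have hd1 : delta ≤ 1 := by linarith
  rw [intervalIntegral.integral_of_le zero_le_one, MeasureTheory.integral_Ioc_eq_integral_Ioo]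
  have hpt : Set.EqOn
      (fun v : ℝ => v ^ kappa * (1 - v) ^ (-kappa)
          * (∑' i : ℕ, (ascPochhammer ℝ i).eval delta
              * (ascPochhammer ℝ i).eval (-delta)
              / ((ascPochhammer ℝ i).eval (1/2 + kappa) * (Nat.factorial i)) * v ^ i)
          * (∑' j : ℕ, (ascPochhammer ℝ j).eval delta
              * (ascPochhammer ℝ j).eval (-delta)
              / ((ascPochhammer ℝ j).eval (1/2 - kappa) * (Nat.factorial j)) * (1 - v) ^ j)
          * (v * (1 - v)) ^ (-(1:ℝ)/2))
      (fun v : ℝ => (v ^ (1/2 + kappa - 1) * (1 - v) ^ (1/2 - kappa - 1))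
          * ((∑' i : ℕ, (ascPochhammer ℝ i).eval delta
              * (ascPochhammer ℝ i).eval (-delta)
              / ((ascPochhammer ℝ i).eval (1/2 + kappa) * (Nat.factorial i)) * v ^ i)
          * (∑' j : ℕ, (ascPochhammer ℝ j).eval delta
              * (ascPochhammer ℝ j).eval (-delta)
              / ((ascPochhammer ℝ j).eval (1/2 - kappa) * (Nat.factorial j)) * (1 - v) ^ j)))
      (Set.Ioo 0 1) := by
    intro v hv
    have hv0 : (0:ℝ) < v := hv.1
    have h1v : (0:ℝ) < 1 - v := by linarith [hv.2]
    dsimp only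
    have e0 : (v * (1 - v)) ^ (-(1:ℝ)/2) = v ^ (-(1:ℝ)/2) * (1 - v) ^ (-(1:ℝ)/2) :=
      Real.mul_rpow hv0.le h1v.le
    have e1 : v ^ kappa * v ^ (-(1:ℝ)/2) = v ^ (1/2 + kappa - 1) := by
      rw [← Real.rpow_add hv0]; congr 1; ring
    have e2 : (1 - v) ^ (-kappa) * (1 - v) ^ (-(1:ℝ)/2) = (1 - v) ^ (1/2 - kappa - 1) := by
      rw [← Real.rpow_add h1v]; congr 1; ring
    rw [e0, ← e1, ← e2]
    ring
  rw [MeasureTheory.setIntegral_congr_fun measurableSet_Ioo hpt,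
    my_main ha hb (by ring) hd hd1]
  congr 1
  exact tsum_congr fun p => by ring
end

section
/- For real δ with 0 < δ < 1/2, ∑_{i,j≥0} (δ)_i(−δ)_i(δ)_j(−δ)_j/(i! j! (i+j)!) = (1/π)·((π/2)cos(πδ) + (1/(2δ))sin(πδ)). -/
open Real MeasureTheory intervalIntegral Set Filter

noncomputable def Acoef (δ : ℝ) (k : ℕ) : ℝ :=
  (ascPochhammer ℝ k).eval δ * (ascPochhammer ℝ k).eval (-δ)

lemma Acoef_zero (δ : ℝ) : Acoef δ 0 = 1 := by simp [Acoef]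

lemma Acoef_succ (δ : ℝ) (k : ℕ) : Acoef δ (k+1) = Acoef δ k * ((k:ℝ)^2 - δ^2) := by
  unfold Acoef
  rw [ascPochhammer_succ_eval, ascPochhammer_succ_eval]
  ring

lemma abs_Acoef_le {δ : ℝ} (hd : 0 < δ) (hd' : δ < 1/2) (k : ℕ) :
    |Acoef δ k| ≤ 4 * (k.factorial)^2 / ((k:ℝ)+1)^2 := by
  have hδ2 : δ^2 < 1/4 := by nlinarith
  induction k with
  | zero => norm_num [Acoef_zero]
  | succ k ih =>
    push_cast [Nat.factorial_succ]
    rw [Acoef_succ, abs_mul]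
    have hfac : |(k:ℝ)^2 - δ^2| ≤ (k:ℝ)^2 + 1/4 := by
      rw [abs_le]; constructor <;> nlinarith [sq_nonneg (k:ℝ)]
    have hfpos : (0:ℝ) < (k.factorial:ℝ) := by exact_mod_cast Nat.factorial_pos k
    have step1 : |Acoef δ k| * |(k:ℝ)^2 - δ^2|
        ≤ 4 * (k.factorial:ℝ)^2 / ((k:ℝ)+1)^2 * ((k:ℝ)^2 + 1/4) :=
      mul_le_mul ih hfac (abs_nonneg _) (by positivity)
    refine step1.trans ?_
    rw [div_mul_eq_mul_div, div_le_div_iff₀ (by positivity) (by positivity)]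
    nlinarith [mul_nonneg (sq_nonneg ((k.factorial:ℝ))) (show (0:ℝ) ≤ 7*(k:ℝ)^2+12*k by positivity)]

noncomputable def Ccoef (δ : ℝ) (k : ℕ) : ℝ := Acoef δ k * 4^k / (2*k).factorial

lemma Ccoef_zero (δ : ℝ) : Ccoef δ 0 = 1 := by simp [Ccoef, Acoef_zero]

lemma Ccoef_rec (δ : ℝ) (k : ℕ) :
    Ccoef δ (k+1) * ((k:ℝ)+1) * ((k:ℝ)+1/2) = Ccoef δ k * ((k:ℝ)^2 - δ^2) := by
  unfold Ccoef
  rw [Acoef_succ]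
  have h : ((2*(k+1)).factorial : ℝ) = (2*k+2)*(2*k+1)*(2*k).factorial := by
    rw [show 2*(k+1) = (2*k+1)+1 by ring, Nat.factorial_succ, Nat.factorial_succ]
    push_cast; ring
  rw [h, pow_succ]
  have h2 : ((2*k).factorial : ℝ) ≠ 0 := by exact_mod_cast (Nat.factorial_pos _).ne'
  field_simp
  ring

lemma abs_Ccoef_le {δ : ℝ} (hd : 0 < δ) (hd' : δ < 1/2) (k : ℕ) :
    |Ccoef δ k| ≤ 8 / ((k:ℝ)+1) := by
  have hA := abs_Acoef_le hd hd' k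
  have hfpos : (0:ℝ) < (k.factorial:ℝ) := by exact_mod_cast Nat.factorial_pos k
  have h2fpos : (0:ℝ) < ((2*k).factorial:ℝ) := by exact_mod_cast Nat.factorial_pos (2*k)
  have hCB : (4:ℝ)^k * ((k.factorial):ℝ)^2 ≤ (2*(k:ℝ)+2) * (2*k).factorial := by
    rcases Nat.eq_zero_or_pos k with rfl | hk
    · norm_num
    · have h4 := Nat.four_pow_le_two_mul_self_mul_centralBinom k hk
      have hnat : k.centralBinom * (k.factorial * k.factorial) = (2*k).factorial := by
        rw [Nat.centralBinom]
        have := Nat.choose_mul_factorial_mul_factorial (show k ≤ 2*k by omega)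
        rw [show 2*k-k = k by omega] at this
        rw [← this]; ring
      have h4' : (4:ℝ)^k ≤ 2*(k:ℝ) * k.centralBinom := by exact_mod_cast h4
      have hc' : (k.centralBinom : ℝ) * ((k.factorial:ℝ) * k.factorial) = ((2*k).factorial : ℝ) := by
        exact_mod_cast hnat
      have hmul := mul_le_mul_of_nonneg_right h4' (by positivity : (0:ℝ) ≤ (k.factorial:ℝ)^2)
      nlinarith [hmul, hc', h2fpos, hfpos, sq_nonneg ((k:ℝ))]
  have hACk : |Ccoef δ k| = |Acoef δ k| * 4^k / (2*k).factorial := by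
    rw [Ccoef, abs_div, abs_mul, abs_pow]
    rw [abs_of_nonneg (by norm_num : (0:ℝ) ≤ (4:ℝ)), abs_of_nonneg h2fpos.le]
  rw [hACk, div_le_div_iff₀ h2fpos (by positivity)]
  have hA' : |Acoef δ k| * ((k:ℝ)+1)^2 ≤ 4 * (k.factorial:ℝ)^2 := by
    rw [← le_div_iff₀ (by positivity)]
    calc |Acoef δ k| ≤ 4 * (k.factorial:ℝ)^2 / ((k:ℝ)+1)^2 := hA
      _ ≤ _ := le_rfl
  have hk1 : (0:ℝ) < (k:ℝ)+1 := by positivity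
  have key : |Acoef δ k| * 4^k * ((k:ℝ)+1) * ((k:ℝ)+1) ≤ 8 * (2*k).factorial * ((k:ℝ)+1) := by
    have h1 : |Acoef δ k| * ((k:ℝ)+1)^2 * 4^k ≤ 4 * (k.factorial:ℝ)^2 * 4^k :=
      mul_le_mul_of_nonneg_right hA' (by positivity)
    nlinarith [hCB, h1, abs_nonneg (Acoef δ k), pow_pos (show (0:ℝ)<4 by norm_num) k]
  exact le_of_mul_le_mul_right key hk1

noncomputable def Wint (i j : ℕ) : ℝ := ∫ x in (0:ℝ)..(π/2), sin x ^ (2*i) * cos x ^ (2*j)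

lemma Wint_zero_zero : Wint 0 0 = π/2 := by simp [Wint]

lemma Wint_symm (i j : ℕ) : Wint i j = Wint j i := by
  unfold Wint
  have := intervalIntegral.integral_comp_sub_left
    (a := (0:ℝ)) (b := π/2) (fun x => sin x ^ (2*j) * cos x ^ (2*i)) (π/2)
  simp only [sub_zero, sub_self] at this
  rw [← this]
  congr 1; ext x
  rw [sin_pi_div_two_sub, cos_pi_div_two_sub]; ring

lemma Wint_succ_left (i j : ℕ) :
    (2*(i:ℝ)+2*j+2) * Wint (i+1) j = (2*i+1) * Wint i j := by
  have hder : ∀ x ∈ uIcc (0:ℝ) (π/2), HasDerivAt (fun x => sin x ^ (2*i+1) * cos x ^ (2*j+1))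
      ((2*(i:ℝ)+1) * (sin x ^ (2*i) * cos x ^ (2*j))
        - (2*(i:ℝ)+2*j+2) * (sin x ^ (2*(i+1)) * cos x ^ (2*j))) x := by
    intro x _
    have h1 : HasDerivAt (fun x => sin x ^ (2*i+1)) ((2*i+1 : ℕ) * sin x ^ (2*i) * cos x) x := by
      simpa [mul_comm, mul_assoc, mul_left_comm] using (Real.hasDerivAt_sin x).fun_pow (2*i+1)
    have h2 : HasDerivAt (fun x => cos x ^ (2*j+1)) ((2*j+1 : ℕ) * cos x ^ (2*j) * (-sin x)) x := by
      simpa [mul_comm, mul_assoc, mul_left_comm] using (Real.hasDerivAt_cos x).fun_pow (2*j+1)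
    have : HasDerivAt (fun x => sin x ^ (2*i+1) * cos x ^ (2*j+1)) _ x := h1.fun_mul h2
    convert this using 1
    have hc : cos x ^ (2*j+1+1) = (1 - sin x ^ 2) * cos x ^ (2*j) := by
      rw [← Real.cos_sq' x]; ring
    push_cast
    calc (2*(i:ℝ)+1) * (sin x ^ (2*i) * cos x ^ (2*j))
        - (2*(i:ℝ)+2*j+2) * (sin x ^ (2*(i+1)) * cos x ^ (2*j))
        = (2*(i:ℝ)+1) * (sin x ^ (2*i) * ((1 - sin x ^2) * cos x ^ (2*j)))
          - (2*(j:ℝ)+1) * (sin x ^ (2*i) * sin x * (sin x * cos x ^ (2*j))) := by ring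
      _ = _ := by rw [← hc]; ring_nf
  have hint := intervalIntegral.integral_eq_sub_of_hasDerivAt hder (by
    apply Continuous.intervalIntegrable; fun_prop)
  simp only [Real.sin_zero, Real.cos_pi_div_two, Real.sin_pi_div_two, Real.cos_zero] at hint
  rw [zero_pow (by omega), zero_pow (by omega)] at hint
  simp only [zero_mul, mul_zero, one_pow, mul_one, sub_zero, zero_sub, sub_self,
    one_mul] at hint
  rw [intervalIntegral.integral_sub (by apply Continuous.intervalIntegrable; fun_prop)
    (by apply Continuous.intervalIntegrable; fun_prop),
    intervalIntegral.integral_const_mul, intervalIntegral.integral_const_mul] at hint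
  have : (2*(i:ℝ)+1) * Wint i j - (2*(i:ℝ)+2*j+2) * Wint (i+1) j = 0 := by
    rw [Wint, Wint]; linarith [hint]
  linarith [this]

lemma Wint_succ_right (i j : ℕ) :
    (2*(i:ℝ)+2*j+2) * Wint i (j+1) = (2*j+1) * Wint i j := by
  rw [Wint_symm i (j+1), Wint_symm i j]
  have := Wint_succ_left j i
  linarith [this]

lemma fact_cast_two_succ (n : ℕ) : ((2*(n+1)).factorial : ℝ)
    = (2*n+2)*(2*n+1)*(2*n).factorial := by
  rw [show 2*(n+1) = (2*n+1)+1 by ring, Nat.factorial_succ, Nat.factorial_succ]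
  push_cast; ring

lemma fact_cast_succ (n : ℕ) : ((n+1).factorial : ℝ) = (n+1)*n.factorial := by
  rw [Nat.factorial_succ]; push_cast; ring

lemma Wint_eq (i j : ℕ) : Wint i j
    = π/2 * (2*i).factorial * (2*j).factorial
      / (4^(i+j) * i.factorial * j.factorial * (i+j).factorial) := by
  have fpos : ∀ n : ℕ, (0:ℝ) < n.factorial := fun n => by
    exact_mod_cast Nat.factorial_pos n
  have f0 : ∀ n : ℕ, ((n.factorial:ℝ)) ≠ 0 := fun n => (fpos n).ne'
  have p4 : ∀ n : ℕ, (4:ℝ)^n ≠ 0 := fun n => by positivity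
  induction i with
  | zero =>
    induction j with
    | zero => simpa using Wint_zero_zero
    | succ j ihj =>
      have h := Wint_succ_right 0 j
      rw [ihj] at h
      rw [fact_cast_two_succ, fact_cast_succ]
      rw [show (0:ℕ)+(j+1) = (0+j)+1 by ring, fact_cast_succ, pow_succ]
      field_simp [f0, p4] at h ⊢
      push_cast at h ⊢
      nlinarith [h, Real.pi_pos, fpos j, fpos (2*j), fpos (0+j),
        pow_pos (show (0:ℝ)<4 by norm_num) (0+j)]
  | succ i ihi =>
    have h := Wint_succ_left i j
    rw [ihi] at h
    rw [fact_cast_two_succ, fact_cast_succ]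
    rw [show (i+1)+j = (i+j)+1 by ring, fact_cast_succ, pow_succ]
    field_simp [f0, p4] at h ⊢
    push_cast at h ⊢
    nlinarith [h, Real.pi_pos, fpos i, fpos j, fpos (i+j), fpos (2*i), fpos (2*j),
      pow_pos (show (0:ℝ)<4 by norm_num) (i+j)]

noncomputable def Gf (δ u : ℝ) : ℝ := ∑' k : ℕ, Ccoef δ k * u^k
noncomputable def G1 (δ u : ℝ) : ℝ := ∑' k : ℕ, Ccoef δ k * ((k:ℝ) * u^(k-1))
noncomputable def G2 (δ u : ℝ) : ℝ :=
  ∑' k : ℕ, Ccoef δ k * ((k:ℝ) * (((k-1:ℕ):ℝ) * u^(k-1-1)))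

lemma abs_Ccoef_le' {δ : ℝ} (hd : 0 < δ) (hd' : δ < 1/2) (k : ℕ) : |Ccoef δ k| ≤ 8 := by
  refine (abs_Ccoef_le hd hd' k).trans ?_
  rw [div_le_iff₀ (by positivity)]
  nlinarith [Nat.cast_nonneg (α := ℝ) k]

lemma summable_geom_sq {r : ℝ} (h0 : 0 ≤ r) (hr : r < 1) :
    Summable (fun k : ℕ => ((k:ℝ)+2)^2 * r^k) := by
  have h : ‖r‖ < 1 := by rwa [Real.norm_eq_abs, abs_of_nonneg h0]
  have h2 := summable_pow_mul_geometric_of_norm_lt_one 2 h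
  have h1 := summable_pow_mul_geometric_of_norm_lt_one 1 h
  have h0' := summable_geometric_of_lt_one h0 hr
  have := (h2.add ((h1.mul_left 4).add (h0'.mul_left 4)))
  refine this.congr fun k => ?_
  push_cast; ring

lemma summable_G0_at {δ : ℝ} (hd : 0 < δ) (hd' : δ < 1/2) {u : ℝ} (hu : |u| < 1) :
    Summable (fun k : ℕ => Ccoef δ k * u^k) := by
  refine Summable.of_norm_bounded (g := fun k => 8 * |u|^k)
    ((summable_geometric_of_lt_one (abs_nonneg u) hu).mul_left 8) (fun k => ?_)
  rw [norm_mul, norm_pow, Real.norm_eq_abs, Real.norm_eq_abs]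
  exact mul_le_mul_of_nonneg_right (abs_Ccoef_le' hd hd' k) (by positivity)

lemma summable_G1_bound {r : ℝ} (h0 : 0 ≤ r) (hr : r < 1) :
    Summable (fun k : ℕ => 8 * ((k:ℝ) * r^(k-1))) := by
  refine (summable_nat_add_iff (f := fun k : ℕ => 8 * ((k:ℝ) * r^(k-1))) 1).mp ?_
  have := (summable_geom_sq h0 hr).mul_left 8
  refine Summable.of_norm_bounded this fun k => ?_
  simp only [Nat.add_sub_cancel, Real.norm_eq_abs]
  rw [abs_of_nonneg (by positivity)]
  have : ((k:ℝ)+1) ≤ ((k:ℝ)+2)^2 := by nlinarith [Nat.cast_nonneg (α := ℝ) k]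
  push_cast
  nlinarith [pow_nonneg h0 k, mul_le_mul_of_nonneg_right this (pow_nonneg h0 k)]

lemma summable_G2_bound {r : ℝ} (h0 : 0 ≤ r) (hr : r < 1) :
    Summable (fun k : ℕ => 8 * ((k:ℝ) * (((k-1:ℕ):ℝ) * r^(k-1-1)))) := by
  refine (summable_nat_add_iff
    (f := fun k : ℕ => 8 * ((k:ℝ) * (((k-1:ℕ):ℝ) * r^(k-1-1)))) 2).mp ?_
  have := (summable_geom_sq h0 hr).mul_left 16
  refine Summable.of_norm_bounded this fun k => ?_
  simp only [Real.norm_eq_abs, show ∀ k:ℕ, k+2-1-1 = k from fun k => rfl,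
    show ∀ k:ℕ, k+2-1 = k+1 from fun k => rfl]
  rw [abs_of_nonneg (by positivity)]
  push_cast
  nlinarith [pow_nonneg h0 k, Nat.cast_nonneg (α := ℝ) k,
    mul_le_mul_of_nonneg_right (show ((k:ℝ)+2)*((k:ℝ)+1) ≤ 2*((k:ℝ)+2)^2 by nlinarith [Nat.cast_nonneg (α := ℝ) k]) (pow_nonneg h0 k)]

lemma summable_G1_at {δ : ℝ} (hd : 0 < δ) (hd' : δ < 1/2) {u : ℝ} (hu : |u| < 1) :
    Summable (fun k : ℕ => Ccoef δ k * ((k:ℝ) * u^(k-1))) := by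
  refine Summable.of_norm_bounded (summable_G1_bound (abs_nonneg u) hu) (fun k => ?_)
  rw [Real.norm_eq_abs, abs_mul, abs_mul, abs_pow, Nat.abs_cast]
  exact mul_le_mul (abs_Ccoef_le' hd hd' k) le_rfl (by positivity) (by norm_num)

lemma summable_G2_at {δ : ℝ} (hd : 0 < δ) (hd' : δ < 1/2) {u : ℝ} (hu : |u| < 1) :
    Summable (fun k : ℕ => Ccoef δ k * ((k:ℝ) * (((k-1:ℕ):ℝ) * u^(k-1-1)))) := by
  refine Summable.of_norm_bounded (summable_G2_bound (abs_nonneg u) hu) (fun k => ?_)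
  rw [Real.norm_eq_abs, abs_mul, abs_mul, abs_mul, abs_pow, Nat.abs_cast, Nat.abs_cast]
  exact mul_le_mul (abs_Ccoef_le' hd hd' k) le_rfl (by positivity) (by norm_num)

lemma hasDerivAt_Gf {δ : ℝ} (hd : 0 < δ) (hd' : δ < 1/2) {u : ℝ} (hu : |u| < 1) :
    HasDerivAt (Gf δ) (G1 δ u) u := by
  set r : ℝ := (|u| + 1)/2 with hr_def
  have hr0 : 0 ≤ r := by positivity
  have hr1 : r < 1 := by rw [hr_def]; linarith
  have hur : |u| < r := by rw [hr_def]; linarith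
  have hmem : u ∈ Set.Ioo (-r) r := by
    constructor <;> [linarith [neg_abs_le u]; linarith [le_abs_self u]]
  have h0mem : (0:ℝ) ∈ Set.Ioo (-r) r := by
    constructor <;> [linarith [abs_nonneg u]; linarith [abs_nonneg u]]
  exact hasDerivAt_tsum_of_isPreconnected
    (u := fun k : ℕ => 8 * ((k:ℝ) * r^(k-1)))
    (summable_G1_bound hr0 hr1) isOpen_Ioo (convex_Ioo _ _).isPreconnected
    (fun k y _ => ((hasDerivAt_pow k y).const_mul (Ccoef δ k)))
    (fun k y hy => by
      rw [Real.norm_eq_abs, abs_mul, abs_mul, abs_pow, Nat.abs_cast]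
      have hyr : |y| ≤ r := by
        rw [abs_le]; exact ⟨hy.1.le, hy.2.le⟩
      refine mul_le_mul (abs_Ccoef_le' hd hd' k)
        (mul_le_mul_of_nonneg_left (pow_le_pow_left₀ (abs_nonneg y) hyr _) (by positivity))
        (by positivity) (by norm_num))
    h0mem
    (by
      refine summable_of_ne_finset_zero (s := {0}) fun k hk => ?_
      have : k ≠ 0 := by simpa using hk
      simp [zero_pow this])
    hmem

lemma hasDerivAt_G1 {δ : ℝ} (hd : 0 < δ) (hd' : δ < 1/2) {u : ℝ} (hu : |u| < 1) :
    HasDerivAt (G1 δ) (G2 δ u) u := by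
  set r : ℝ := (|u| + 1)/2 with hr_def
  have hr0 : 0 ≤ r := by positivity
  have hr1 : r < 1 := by rw [hr_def]; linarith
  have hmem : u ∈ Set.Ioo (-r) r := by
    constructor <;> [linarith [neg_abs_le u]; linarith [le_abs_self u]]
  have h0mem : (0:ℝ) ∈ Set.Ioo (-r) r := by
    constructor <;> [linarith [abs_nonneg u]; linarith [abs_nonneg u]]
  exact hasDerivAt_tsum_of_isPreconnected
    (u := fun k : ℕ => 8 * ((k:ℝ) * (((k-1:ℕ):ℝ) * r^(k-1-1))))
    (summable_G2_bound hr0 hr1) isOpen_Ioo (convex_Ioo _ _).isPreconnected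
    (fun k y _ => (((hasDerivAt_pow (k-1) y).const_mul ((k:ℝ))).const_mul (Ccoef δ k)))
    (fun k y hy => by
      rw [Real.norm_eq_abs, abs_mul, abs_mul, abs_mul, abs_pow, Nat.abs_cast, Nat.abs_cast]
      have hyr : |y| ≤ r := by
        rw [abs_le]; exact ⟨hy.1.le, hy.2.le⟩
      refine mul_le_mul (abs_Ccoef_le' hd hd' k) ?_ (by positivity) (by norm_num)
      refine mul_le_mul_of_nonneg_left ?_ (by positivity)
      exact mul_le_mul_of_nonneg_left (pow_le_pow_left₀ (abs_nonneg y) hyr _) (by positivity))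
    h0mem
    (by
      refine summable_of_ne_finset_zero (s := {0, 1}) fun k hk => ?_
      have hk2 : 2 ≤ k := by
        simp only [Finset.mem_insert, Finset.mem_singleton] at hk; omega
      have : k - 1 ≠ 0 := by omega
      simp [zero_pow this])
    hmem

lemma G_ode {δ : ℝ} (hd : 0 < δ) (hd' : δ < 1/2) {u : ℝ} (hu : |u| < 1) :
    u*(1-u)*G2 δ u + (1/2-u)*G1 δ u + δ^2 * Gf δ u = 0 := by
  set D : ℕ → ℝ := fun k => Ccoef δ k * k * ((k:ℝ)-1/2) * u^(k-1) with hD_def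
  have hDsucc : ∀ k : ℕ, D (k+1) = Ccoef δ k * ((k:ℝ)^2 - δ^2) * u^k := by
    intro k
    have hrec := Ccoef_rec δ k
    simp only [hD_def, Nat.add_sub_cancel]
    push_cast
    linear_combination u^k * hrec
  set t : ℕ → ℝ := fun k =>
    u*(1-u)*(Ccoef δ k * ((k:ℝ) * (((k-1:ℕ):ℝ) * u^(k-1-1))))
    + ((1/2-u)*(Ccoef δ k * ((k:ℝ) * u^(k-1))) + δ^2*(Ccoef δ k * u^k)) with ht_def
  have ht : ∀ k, t k = D k - D (k+1) := by
    intro k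
    rw [hDsucc k]
    match k with
    | 0 => simp [ht_def, hD_def]; ring
    | 1 =>
      simp only [ht_def, hD_def]
      norm_num
      ring
    | (m+2) =>
      simp only [ht_def, hD_def, show m+2-1-1 = m from rfl, show m+2-1 = m+1 from rfl]
      push_cast
      have e1 : u^(m+1) = u^m * u := pow_succ u m
      have e2 : u^(m+2) = u^m * u * u := by rw [pow_succ, pow_succ]
      rw [e1, e2]
      ring
  have s2 := summable_G2_at hd hd' hu
  have s1 := summable_G1_at hd hd' hu
  have s0 := summable_G0_at hd hd' hu
  have hsum_t : Summable t := by
    refine ((s2.mul_left (u*(1-u))).add ((s1.mul_left (1/2-u)).add (s0.mul_left (δ^2))))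
  have htsum : ∑' k, t k = u*(1-u)*G2 δ u + ((1/2-u)*G1 δ u + δ^2 * Gf δ u) := by
    rw [ht_def]
    rw [Summable.tsum_add (s2.mul_left _) ((s1.mul_left _).add (s0.mul_left _)),
      Summable.tsum_add (s1.mul_left _) (s0.mul_left _),
      tsum_mul_left, tsum_mul_left, tsum_mul_left]
    rfl
  have hD0 : D 0 = 0 := by simp [hD_def]
  have hDlim : Tendsto D atTop (nhds 0) := by
    have hsD : Summable D := by
      refine Summable.of_norm_bounded (g := fun k => 8 * ((k:ℝ) * |u|^(k-1)) + 8 * ((k:ℝ) * |u|^(k-1)))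
        ((summable_G1_bound (abs_nonneg u) hu).add (summable_G1_bound (abs_nonneg u) hu))
        (fun k => ?_)
      simp only [hD_def, Real.norm_eq_abs]
      rw [abs_mul, abs_mul, abs_mul, Nat.abs_cast, abs_pow]
      have h1 : |Ccoef δ k| ≤ 8 := abs_Ccoef_le' hd hd' k
      have h2 : |(k:ℝ) - 1/2| ≤ (k:ℝ) + 1 := by
        rw [abs_le]; constructor <;> [nlinarith [Nat.cast_nonneg (α := ℝ) k]; nlinarith [Nat.cast_nonneg (α := ℝ) k]]
      have h3 : |Ccoef δ k| * |(k:ℝ)-1/2| ≤ 8 := by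
        have hmm := mul_le_mul (abs_Ccoef_le hd hd' k) h2 (abs_nonneg _) (by positivity)
        calc |Ccoef δ k| * |(k:ℝ)-1/2| ≤ 8/((k:ℝ)+1) * ((k:ℝ)+1) := hmm
          _ = 8 := div_mul_cancel₀ 8 (by positivity)
      calc |Ccoef δ k| * (k:ℝ) * |(k:ℝ)-1/2| * |u|^(k-1)
          = (|Ccoef δ k| * |(k:ℝ)-1/2|) * ((k:ℝ) * |u|^(k-1)) := by ring
        _ ≤ 8 * ((k:ℝ) * |u|^(k-1)) := mul_le_mul_of_nonneg_right h3 (by positivity)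
        _ ≤ 8*((k:ℝ)*|u|^(k-1)) + 8*((k:ℝ)*|u|^(k-1)) :=
            le_add_of_nonneg_right (by positivity)
    exact hsD.tendsto_atTop_zero
  have hpartial : ∀ n, ∑ k ∈ Finset.range n, t k = D 0 - D n := by
    intro n
    rw [show ∑ k ∈ Finset.range n, t k = ∑ k ∈ Finset.range n, (D k - D (k+1)) from
      Finset.sum_congr rfl (fun k _ => ht k)]
    exact Finset.sum_range_sub' D n
  have hlim0 : Tendsto (fun n => ∑ k ∈ Finset.range n, t k) atTop (nhds 0) := by
    simp only [hpartial, hD0, zero_sub]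
    simpa using hDlim.neg
  have := hsum_t.hasSum.tendsto_sum_nat
  have h0 : ∑' k, t k = 0 := tendsto_nhds_unique this hlim0
  rw [htsum] at h0
  linarith [h0]

lemma Gf_zero (δ : ℝ) : Gf δ 0 = 1 := by
  rw [Gf, tsum_eq_single 0 (fun k hk => by simp [zero_pow hk])]
  simp [Ccoef_zero]

lemma sin_sq_lt_one {t : ℝ} (ht : -(π/2) < t) (ht' : t < π/2) : |Real.sin t ^ 2| < 1 := by
  have hcos : 0 < Real.cos t := Real.cos_pos_of_mem_Ioo ⟨ht, ht'⟩
  have := Real.sin_sq_add_cos_sq t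
  rw [abs_of_nonneg (sq_nonneg _)]
  nlinarith

lemma hasDerivAt_Hf {δ : ℝ} (hd : 0 < δ) (hd' : δ < 1/2) {t : ℝ}
    (ht : -(π/2) < t) (ht' : t < π/2) :
    HasDerivAt (fun t => Gf δ (Real.sin t ^ 2))
      (G1 δ (Real.sin t ^ 2) * (2 * Real.sin t * Real.cos t)) t := by
  have husin : HasDerivAt (fun t => Real.sin t ^ 2) (2 * Real.sin t * Real.cos t) t := by
    have := (Real.hasDerivAt_sin t).fun_pow 2
    simpa [mul_comm, mul_assoc, mul_left_comm] using this
  exact (hasDerivAt_Gf hd hd' (sin_sq_lt_one ht ht')).comp t husin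

lemma hasDerivAt_H1f {δ : ℝ} (hd : 0 < δ) (hd' : δ < 1/2) {t : ℝ}
    (ht : -(π/2) < t) (ht' : t < π/2) :
    HasDerivAt (fun t => G1 δ (Real.sin t ^ 2) * (2 * Real.sin t * Real.cos t))
      (-(4*δ^2) * Gf δ (Real.sin t ^ 2)) t := by
  have husin : HasDerivAt (fun t => Real.sin t ^ 2) (2 * Real.sin t * Real.cos t) t := by
    have := (Real.hasDerivAt_sin t).fun_pow 2
    simpa [mul_comm, mul_assoc, mul_left_comm] using this
  have h1 : HasDerivAt (fun t => G1 δ (Real.sin t ^ 2))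
      (G2 δ (Real.sin t ^ 2) * (2 * Real.sin t * Real.cos t)) t :=
    by exact (hasDerivAt_G1 hd hd' (sin_sq_lt_one ht ht')).comp t husin
  have h2 : HasDerivAt (fun t => 2 * Real.sin t * Real.cos t)
      (2 * (Real.cos t ^ 2 - Real.sin t ^ 2)) t := by
    have : HasDerivAt (fun t => 2 * Real.sin t * Real.cos t) _ t :=
      ((Real.hasDerivAt_sin t).const_mul 2).fun_mul (Real.hasDerivAt_cos t)
    convert this using 1
    ring
  have : HasDerivAt (fun t => G1 δ (Real.sin t ^ 2) * (2 * Real.sin t * Real.cos t)) _ t :=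
    h1.fun_mul h2
  convert this using 1
  have hode := G_ode hd hd' (sin_sq_lt_one ht ht')
  have hpyth : Real.cos t ^ 2 = 1 - Real.sin t ^ 2 := by
    nlinarith [Real.sin_sq_add_cos_sq t]
  linear_combination (-4) * hode
    + (-(4*Real.sin t^2*G2 δ (Real.sin t^2)) - 2*G1 δ (Real.sin t^2)) * hpyth

lemma Gf_sin_sq_eq_cos {δ : ℝ} (hd : 0 < δ) (hd' : δ < 1/2) {θ : ℝ}
    (h0 : 0 ≤ θ) (hθ : θ < π/2) : Gf δ (Real.sin θ ^ 2) = Real.cos (2*δ*θ) := by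
  set L : ℝ×ℝ →L[ℝ] ℝ×ℝ := ContinuousLinearMap.prod (ContinuousLinearMap.snd ℝ ℝ ℝ)
    ((-(4*δ^2)) • ContinuousLinearMap.fst ℝ ℝ ℝ) with hL
  set v : ℝ → ℝ×ℝ → ℝ×ℝ := fun _ p => L p with hv_def
  have hv : ∀ t, LipschitzWith ‖L‖₊ (v t) := fun _ => L.lipschitz
  set f : ℝ → ℝ×ℝ := fun t => (Gf δ (Real.sin t ^ 2),
    G1 δ (Real.sin t ^ 2) * (2 * Real.sin t * Real.cos t)) with hf_def
  set g : ℝ → ℝ×ℝ := fun t => (Real.cos (2*δ*t), -(2*δ) * Real.sin (2*δ*t)) with hg_def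
  have hmem : ∀ t ∈ Set.Icc 0 θ, -(π/2) < t ∧ t < π/2 := by
    intro t ht
    have hpi : 0 < π/2 := by positivity
    exact ⟨by linarith [ht.1], by linarith [ht.2]⟩
  have hfd : ∀ t ∈ Set.Icc 0 θ, HasDerivAt f (v t (f t)) t := by
    intro t ht
    obtain ⟨h1, h2⟩ := hmem t ht
    have := (hasDerivAt_Hf hd hd' h1 h2).prodMk (hasDerivAt_H1f hd hd' h1 h2)
    convert this using 1
    rfl
  have hgd : ∀ t : ℝ, HasDerivAt g (v t (g t)) t := by
    intro t
    have hc : HasDerivAt (fun t => Real.cos (2*δ*t)) (-(2*δ) * Real.sin (2*δ*t)) t := by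
      have : HasDerivAt (fun t => Real.cos (2*δ*t)) _ t := ((hasDerivAt_id t).const_mul (2*δ)).cos
      convert this using 1
      simp only [id_eq]
      ring
    have hs : HasDerivAt (fun t => -(2*δ) * Real.sin (2*δ*t)) (-(4*δ^2) * Real.cos (2*δ*t)) t := by
      have : HasDerivAt (fun t => -(2*δ) * Real.sin (2*δ*t)) _ t :=
        (((hasDerivAt_id t).const_mul (2*δ)).sin).const_mul (-(2*δ))
      convert this using 1
      simp only [id_eq]
      ring
    have := hc.prodMk hs
    convert this using 1
    rfl
  have heq : Set.EqOn f g (Set.Icc 0 θ) := by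
    apply ODE_solution_unique hv
    · intro t ht
      exact (hfd t ht).continuousAt.continuousWithinAt
    · intro t ht
      exact (hfd t (Set.mem_Icc_of_Ico ht)).hasDerivWithinAt
    · intro t ht
      exact (hgd t).continuousAt.continuousWithinAt
    · intro t ht
      exact (hgd t).hasDerivWithinAt
    · simp [hf_def, hg_def, Gf_zero]
  have := heq (Set.right_mem_Icc.mpr h0)
  have h1 := congrArg Prod.fst this
  simpa [hf_def, hg_def] using h1

lemma abs_Ccoef_eq (δ : ℝ) (k : ℕ) :
    |Ccoef δ k| = |Acoef δ k| * 4^k / (2*k).factorial := by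
  have h2fpos : (0:ℝ) < ((2*k).factorial:ℝ) := by exact_mod_cast Nat.factorial_pos (2*k)
  rw [Ccoef, abs_div, abs_mul, abs_pow]
  rw [abs_of_nonneg (by norm_num : (0:ℝ) ≤ (4:ℝ)), abs_of_nonneg h2fpos.le]

lemma fact_cast_pos (n : ℕ) : (0:ℝ) < n.factorial := by exact_mod_cast Nat.factorial_pos n

lemma fact_add_le (i j : ℕ) : ((i.factorial:ℝ)) * j.factorial ≤ ((i+j).factorial:ℝ) := by
  exact_mod_cast Nat.le_of_dvd (Nat.factorial_pos _) (Nat.factorial_mul_factorial_dvd_factorial_add i j)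

lemma CCW_eq (δ : ℝ) (i j : ℕ) :
    |Ccoef δ i| * |Ccoef δ j| * (2 * Wint i j)
      = π * (|Acoef δ i| * |Acoef δ j|) / (i.factorial * j.factorial * (i+j).factorial) := by
  rw [abs_Ccoef_eq, abs_Ccoef_eq, Wint_eq, pow_add]
  have := fact_cast_pos i; have := fact_cast_pos j; have := fact_cast_pos (i+j)
  have := fact_cast_pos (2*i); have := fact_cast_pos (2*j)
  field_simp

lemma CCW_le {δ : ℝ} (hd : 0 < δ) (hd' : δ < 1/2) (i j : ℕ) :
    |Ccoef δ i| * |Ccoef δ j| * (2 * Wint i j)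
      ≤ 16 * π / (((i:ℝ)+1)^2 * ((j:ℝ)+1)^2) := by
  rw [CCW_eq]
  have hfi := fact_cast_pos i; have hfj := fact_cast_pos j; have hfij := fact_cast_pos (i+j)
  have hAi := abs_Acoef_le hd hd' i
  have hAj := abs_Acoef_le hd hd' j
  have hle := fact_add_le i j
  rw [div_le_div_iff₀ (by positivity) (by positivity)]
  have h1 : |Acoef δ i| * |Acoef δ j| ≤ (4 * (i.factorial:ℝ)^2 / ((i:ℝ)+1)^2) * (4 * (j.factorial:ℝ)^2 / ((j:ℝ)+1)^2) :=
    mul_le_mul hAi hAj (abs_nonneg _) (by positivity)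
  calc π * (|Acoef δ i| * |Acoef δ j|) * (((i:ℝ)+1)^2 * ((j:ℝ)+1)^2)
      ≤ π * ((4 * (i.factorial:ℝ)^2 / ((i:ℝ)+1)^2) * (4 * (j.factorial:ℝ)^2 / ((j:ℝ)+1)^2)) * (((i:ℝ)+1)^2 * ((j:ℝ)+1)^2) := by
        have hπ := Real.pi_pos
        apply mul_le_mul_of_nonneg_right (mul_le_mul_of_nonneg_left h1 hπ.le) (by positivity)
    _ = 16 * π * ((i.factorial:ℝ)^2 * (j.factorial:ℝ)^2) := by
        field_simp; ring
    _ = 16 * π * ((i.factorial:ℝ) * j.factorial) * ((i.factorial:ℝ) * j.factorial) := by ring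
    _ ≤ 16 * π * ((i.factorial:ℝ) * j.factorial) * ((i+j).factorial:ℝ) := by
        apply mul_le_mul_of_nonneg_left hle (by positivity)
    _ = 16 * π * ((i.factorial:ℝ) * (j.factorial:ℝ) * ((i+j).factorial:ℝ)) := by ring

lemma summable_inv_sq : Summable (fun n : ℕ => 1/((n:ℝ)+1)^2) := by
  have h := Real.summable_one_div_nat_pow.mpr (show 1 < 2 by norm_num)
  have := (summable_nat_add_iff 1).mpr h
  refine this.congr fun n => ?_
  push_cast
  ring


noncomputable def Ff (δ : ℝ) (p : ℕ × ℕ) (φ : ℝ) : ℝ :=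
  (Ccoef δ p.1 * sin (φ/2) ^ (2*p.1)) * (Ccoef δ p.2 * cos (φ/2) ^ (2*p.2))

lemma int_sc (i j : ℕ) :
    ∫ φ in (0:ℝ)..π, sin (φ/2)^(2*i) * cos (φ/2)^(2*j) = 2 * Wint i j := by
  have h := intervalIntegral.integral_comp_div (a := (0:ℝ)) (b := π)
    (f := fun x => sin x ^ (2*i) * cos x ^ (2*j)) (show (2:ℝ) ≠ 0 by norm_num)
  rw [h]
  norm_num [Wint]

lemma int_Ff (δ : ℝ) (p : ℕ × ℕ) :
    ∫ φ in (0:ℝ)..π, Ff δ p φ = Ccoef δ p.1 * Ccoef δ p.2 * (2 * Wint p.1 p.2) := by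
  have : ∀ φ : ℝ, Ff δ p φ = (Ccoef δ p.1 * Ccoef δ p.2) *
      (sin (φ/2)^(2*p.1) * cos (φ/2)^(2*p.2)) := fun φ => by rw [Ff]; ring
  rw [intervalIntegral.integral_congr (fun φ _ => this φ),
    intervalIntegral.integral_const_mul, int_sc]

lemma norm_Ff (δ : ℝ) (p : ℕ × ℕ) (φ : ℝ) :
    ‖Ff δ p φ‖ = (|Ccoef δ p.1| * |Ccoef δ p.2|) *
      (sin (φ/2)^(2*p.1) * cos (φ/2)^(2*p.2)) := by
  have hs : |sin (φ/2) ^ (2*p.1)| = sin (φ/2)^(2*p.1) := by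
    rw [abs_pow, pow_mul, pow_mul, sq_abs]
  have hc : |cos (φ/2) ^ (2*p.2)| = cos (φ/2)^(2*p.2) := by
    rw [abs_pow, pow_mul, pow_mul, sq_abs]
  rw [Real.norm_eq_abs, Ff, abs_mul, abs_mul, abs_mul, hs, hc]
  ring

lemma int_norm_Ff (δ : ℝ) (p : ℕ × ℕ) :
    ∫ φ in Ioc (0:ℝ) π, ‖Ff δ p φ‖ = |Ccoef δ p.1| * |Ccoef δ p.2| * (2 * Wint p.1 p.2) := by
  have h1 : ∫ φ in Ioc (0:ℝ) π, ‖Ff δ p φ‖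
      = ∫ φ in Ioc (0:ℝ) π, (|Ccoef δ p.1| * |Ccoef δ p.2|) *
          (sin (φ/2)^(2*p.1) * cos (φ/2)^(2*p.2)) := by
    congr 1; ext φ; exact norm_Ff δ p φ
  rw [h1, MeasureTheory.integral_const_mul,
    ← intervalIntegral.integral_of_le Real.pi_pos.le, int_sc]

lemma Tp_eq (δ : ℝ) (p : ℕ × ℕ) :
    Acoef δ p.1 * Acoef δ p.2
      / ((p.1.factorial : ℝ) * p.2.factorial * (p.1+p.2).factorial)
    = (1/π) * (Ccoef δ p.1 * Ccoef δ p.2 * (2 * Wint p.1 p.2)) := by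
  rw [Wint_eq, Ccoef, Ccoef, pow_add]
  have := fact_cast_pos p.1; have := fact_cast_pos p.2; have := fact_cast_pos (p.1+p.2)
  have := fact_cast_pos (2*p.1); have := fact_cast_pos (2*p.2)
  have hπ := Real.pi_pos
  field_simp

lemma summable_int_norm_Ff {δ : ℝ} (hd : 0 < δ) (hd' : δ < 1/2) :
    Summable (fun p : ℕ × ℕ => ∫ φ in Ioc (0:ℝ) π, ‖Ff δ p φ‖) := by
  have hf : Summable (fun i : ℕ => ‖16*π/(((i:ℝ)+1)^2)‖) := by
    refine (summable_inv_sq.mul_left (16*π)).congr fun i => ?_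
    rw [Real.norm_eq_abs, abs_of_nonneg (by positivity)]
    ring
  have hg : Summable (fun j : ℕ => ‖1/(((j:ℝ)+1)^2)‖) := by
    refine summable_inv_sq.congr fun j => ?_
    rw [Real.norm_eq_abs, abs_of_nonneg (by positivity)]
  have hbig := summable_mul_of_summable_norm hf hg
  have hbig2 : Summable (fun p : ℕ × ℕ => 16*π/(((p.1:ℝ)+1)^2*((p.2:ℝ)+1)^2)) := by
    refine hbig.congr fun p => ?_
    rw [div_mul_div_comm, mul_one]
  refine Summable.of_nonneg_of_le (fun p => ?_) (fun p => ?_) hbig2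
  · exact MeasureTheory.integral_nonneg fun φ => norm_nonneg _
  · rw [int_norm_Ff]
    exact CCW_le hd hd' p.1 p.2

lemma integrable_Ff (δ : ℝ) (p : ℕ × ℕ) :
    Integrable (Ff δ p) (volume.restrict (Ioc (0:ℝ) π)) := by
  have hcont : Continuous (Ff δ p) := by unfold Ff; fun_prop
  exact hcont.integrableOn_Ioc

lemma tsum_Ff_eq {δ : ℝ} (hd : 0 < δ) (hd' : δ < 1/2) {φ : ℝ}
    (h1 : 0 < φ) (h2 : φ < π) :
    ∑' p : ℕ × ℕ, Ff δ p φ = cos (δ*φ) * cos (δ*(π-φ)) := by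
  have hθ1 : (0:ℝ) < φ/2 := by linarith
  have hθ2 : φ/2 < π/2 := by linarith
  have hpi2 : (0:ℝ) < π/2 := by positivity
  have hu1 : |sin (φ/2) ^ 2| < 1 := sin_sq_lt_one (by linarith) hθ2
  have hu2 : |cos (φ/2) ^ 2| < 1 := by
    rw [show cos (φ/2) = sin (π/2 - φ/2) from (Real.sin_pi_div_two_sub _).symm]
    exact sin_sq_lt_one (by linarith) (by linarith)
  have hf := summable_G0_at hd hd' hu1
  have hg := summable_G0_at hd hd' hu2
  have hfn : Summable (fun i : ℕ => ‖Ccoef δ i * (sin (φ/2)^2)^i‖) := by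
    refine hf.abs.congr fun i => ?_
    rw [Real.norm_eq_abs]
  have hgn : Summable (fun j : ℕ => ‖Ccoef δ j * (cos (φ/2)^2)^j‖) := by
    refine hg.abs.congr fun j => ?_
    rw [Real.norm_eq_abs]
  have hfg := summable_mul_of_summable_norm hfn hgn
  have hprod := Summable.tsum_mul_tsum hf hg hfg
  have hFfrw : ∀ p : ℕ × ℕ, Ff δ p φ
      = (Ccoef δ p.1 * (sin (φ/2)^2)^p.1) * (Ccoef δ p.2 * (cos (φ/2)^2)^p.2) := by
    intro p; rw [Ff, pow_mul, pow_mul]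
  calc ∑' p : ℕ × ℕ, Ff δ p φ
      = ∑' p : ℕ × ℕ, (Ccoef δ p.1 * (sin (φ/2)^2)^p.1) * (Ccoef δ p.2 * (cos (φ/2)^2)^p.2) := by
        exact tsum_congr hFfrw
    _ = (∑' i : ℕ, Ccoef δ i * (sin (φ/2)^2)^i) * (∑' j : ℕ, Ccoef δ j * (cos (φ/2)^2)^j) :=
        hprod.symm
    _ = Gf δ (sin (φ/2)^2) * Gf δ (cos (φ/2)^2) := rfl
    _ = cos (δ*φ) * cos (δ*(π-φ)) := by
        rw [Gf_sin_sq_eq_cos hd hd' hθ1.le hθ2]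
        rw [show cos (φ/2) = sin (π/2 - φ/2) from (Real.sin_pi_div_two_sub _).symm]
        rw [Gf_sin_sq_eq_cos hd hd' (by linarith) (by linarith)]
        congr 1 <;> ring

lemma final_int {δ : ℝ} (hd : 0 < δ) :
    ∫ φ in (0:ℝ)..π, cos (δ*φ) * cos (δ*(π-φ))
      = π/2 * cos (π*δ) + 1/(2*δ) * sin (π*δ) := by
  have hcc : ∀ x y : ℝ, cos x * cos y = (cos (x+y) + cos (x-y))/2 := fun x y => by
    rw [Real.cos_add, Real.cos_sub]; ring
  have hpt : ∀ φ : ℝ, cos (δ*φ) * cos (δ*(π-φ))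
      = cos (δ*π)/2 + cos (2*δ*φ + (-(δ*π)))/2 := by
    intro φ
    rw [hcc]
    have e1 : δ*φ + δ*(π-φ) = δ*π := by ring
    have e2 : δ*φ - δ*(π-φ) = 2*δ*φ + (-(δ*π)) := by ring
    rw [e1, e2]
    ring
  rw [intervalIntegral.integral_congr (fun φ _ => hpt φ)]
  rw [intervalIntegral.integral_add]
  · rw [intervalIntegral.integral_div, intervalIntegral.integral_const]
    have h3 : ∫ φ in (0:ℝ)..π, cos (2*δ*φ + (-(δ*π)))/2
        = (1/2) * ∫ φ in (0:ℝ)..π, cos (2*δ*φ + (-(δ*π))) := by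
      rw [intervalIntegral.integral_div]; ring
    rw [h3]
    have h4 := intervalIntegral.integral_comp_mul_add (a := (0:ℝ)) (b := π)
      (f := Real.cos) (c := 2*δ) (show (2*δ) ≠ 0 by positivity) (-(δ*π))
    rw [h4]
    have e5 : 2*δ*π + (-(δ*π)) = δ*π := by ring
    have e6 : 2*δ*0 + (-(δ*π)) = -(δ*π) := by ring
    rw [e5, e6, integral_cos, Real.sin_neg]
    simp only [smul_eq_mul, sub_zero]
    have hc : cos (δ*π) = cos (π*δ) := by rw [mul_comm]
    have hs : sin (δ*π) = sin (π*δ) := by rw [mul_comm]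
    rw [hc, hs]
    field_simp
    ring
  · apply Continuous.intervalIntegrable; fun_prop
  · apply Continuous.intervalIntegrable; fun_prop

theorem double_series_evaluation
    (delta : ℝ) (hd : 0 < delta) (hd' : delta < 1/2) :
    ∑' p : ℕ × ℕ,
        (ascPochhammer ℝ p.1).eval delta * (ascPochhammer ℝ p.1).eval (-delta)
        * (ascPochhammer ℝ p.2).eval delta * (ascPochhammer ℝ p.2).eval (-delta)
        / ((Nat.factorial p.1) * (Nat.factorial p.2) * (Nat.factorial (p.1 + p.2)))
      = 1 / Real.pi * (Real.pi / 2 * Real.cos (Real.pi * delta)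
          + 1 / (2 * delta) * Real.sin (Real.pi * delta)) := by
  have hsummand : ∀ p : ℕ × ℕ,
      (ascPochhammer ℝ p.1).eval delta * (ascPochhammer ℝ p.1).eval (-delta)
        * (ascPochhammer ℝ p.2).eval delta * (ascPochhammer ℝ p.2).eval (-delta)
        / ((Nat.factorial p.1) * (Nat.factorial p.2) * (Nat.factorial (p.1 + p.2)))
      = (1/π) * ∫ φ in Ioc (0:ℝ) π, Ff delta p φ := by
    intro p
    calc (ascPochhammer ℝ p.1).eval delta * (ascPochhammer ℝ p.1).eval (-delta)
        * (ascPochhammer ℝ p.2).eval delta * (ascPochhammer ℝ p.2).eval (-delta)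
        / ((Nat.factorial p.1) * (Nat.factorial p.2) * (Nat.factorial (p.1 + p.2)))
        = Acoef delta p.1 * Acoef delta p.2
          / ((p.1.factorial : ℝ) * p.2.factorial * (p.1+p.2).factorial) := by
          rw [Acoef, Acoef]; ring_nf
      _ = (1/π) * (Ccoef delta p.1 * Ccoef delta p.2 * (2 * Wint p.1 p.2)) := Tp_eq delta p
      _ = (1/π) * ∫ φ in (0:ℝ)..π, Ff delta p φ := by rw [int_Ff]
      _ = (1/π) * ∫ φ in Ioc (0:ℝ) π, Ff delta p φ := by
          rw [intervalIntegral.integral_of_le Real.pi_pos.le]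
  rw [tsum_congr hsummand, tsum_mul_left]
  rw [MeasureTheory.integral_tsum_of_summable_integral_norm
    (fun p => integrable_Ff delta p) (summable_int_norm_Ff hd hd')]
  have hae0 : ∀ᵐ φ : ℝ, φ ≠ π := by
    rw [MeasureTheory.ae_iff]
    have : {φ : ℝ | ¬ φ ≠ π} = {π} := by ext x; simp
    rw [this]
    exact Real.volume_singleton
  have hae : ∫ φ in Ioc (0:ℝ) π, (∑' p : ℕ × ℕ, Ff delta p φ)
      = ∫ φ in Ioc (0:ℝ) π, Real.cos (delta*φ) * Real.cos (delta*(π-φ)) := by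
    apply MeasureTheory.setIntegral_congr_ae measurableSet_Ioc
    filter_upwards [hae0] with φ hφ hmem
    exact tsum_Ff_eq hd hd' hmem.1 (lt_of_le_of_ne hmem.2 hφ)
  rw [hae, ← intervalIntegral.integral_of_le Real.pi_pos.le, final_int hd]
end
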